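/- arXiv:1803.03458 — 3 statements merged into one kernel-verified Lean document; each statement's English description precedes it below -/
import Mathlib

section
/- A separable metrizable space X is completely Baire if and only if X does not contain a closed subspace homeomorphic to ℚ. -/
namespace HurewiczAux

open Set Metric Topology

/-- A scheme of nested open cells indexed by finite sequences of naturals. -/
structure Scheme (Y : Type*) [MetricSpace Y] where
  V : List ℕ → Set Y
  c : List ℕ → Y
  isOpenV : ∀ s, IsOpen (V s)
  mem_cell : ∀ s, c s ∈ V s
  closure_subset : ∀ s n, closure (V (s ++ [n])) ⊆ V s
  notmem : ∀ s n, c s ∉ closure (V (s ++ [n]))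
  disj : ∀ s m n, m ≠ n → Disjoint (closure (V (s ++ [m]))) (closure (V (s ++ [n])))
  small : ∀ s, ∀ ε : ℝ, 0 < ε → ∃ N, ∀ n, N ≤ n → V (s ++ [n]) ⊆ Metric.ball (c s) ε

namespace Scheme

variable {Y : Type*} [MetricSpace Y] (S : Scheme Y)

lemma subset_append : ∀ (r s : List ℕ), S.V (s ++ r) ⊆ S.V s := by
  intro r
  induction r with
  | nil => intro s; simp
  | cons a r ih =>
    intro s
    have h1 : S.V ((s ++ [a]) ++ r) ⊆ S.V (s ++ [a]) := ih (s ++ [a])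
    have h2 : S.V (s ++ [a]) ⊆ S.V s :=
      subset_trans subset_closure (S.closure_subset s a)
    simpa using subset_trans h1 h2

lemma subset_of_prefix {s t : List ℕ} (h : s <+: t) : S.V t ⊆ S.V s := by
  obtain ⟨r, rfl⟩ := h; exact S.subset_append r s

lemma c_mem_of_prefix {s t : List ℕ} (h : s <+: t) : S.c t ∈ S.V s :=
  S.subset_of_prefix h (S.mem_cell t)

lemma prefix_of_mem_closure : ∀ s t : List ℕ, S.c t ∈ closure (S.V s) → s <+: t := by
  intro s
  induction s using List.reverseRecOn with
  | nil => intro t _; exact List.nil_prefix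
  | append_singleton s' n ih =>
    intro t h
    have h' : S.c t ∈ closure (S.V s') :=
      subset_closure (S.closure_subset s' n h)
    obtain ⟨r, rfl⟩ := ih t h'
    match r with
    | [] => exact absurd (by simpa using h) (by simpa using S.notmem s' n)
    | m :: r' =>
      rcases eq_or_ne m n with rfl | hmn
      · exact ⟨r', by simp⟩
      · exfalso
        have hmem : S.c (s' ++ m :: r') ∈ closure (S.V (s' ++ [m])) :=
          subset_closure (S.c_mem_of_prefix ⟨r', by simp⟩)
        exact (S.disj s' m n hmn).ne_of_mem hmem h rfl

lemma c_injective : Function.Injective S.c := by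
  intro s t h
  have h1 : s <+: t := S.prefix_of_mem_closure s t (h ▸ subset_closure (S.mem_cell s))
  have h2 : t <+: s := S.prefix_of_mem_closure t s (h ▸ subset_closure (S.mem_cell t))
  exact h1.eq_of_length (le_antisymm h1.length_le h2.length_le)

/-- Basic relatively open neighborhood of `c s` inside the scheme's point set. -/
def nbhd (s : List ℕ) (N : ℕ) : Set Y :=
  S.V s \ ⋃ m ∈ Finset.range N, closure (S.V (s ++ [m]))

lemma isOpen_nbhd (s : List ℕ) (N : ℕ) : IsOpen (S.nbhd s N) :=
  (S.isOpenV s).sdiff (isClosed_biUnion_finset fun m _ => isClosed_closure)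

lemma c_mem_nbhd (s : List ℕ) (N : ℕ) : S.c s ∈ S.nbhd s N := by
  refine ⟨S.mem_cell s, ?_⟩
  simp only [Set.mem_iUnion, not_exists]
  intro m _ hm
  have := S.prefix_of_mem_closure _ _ hm
  have := this.length_le
  simp at this

lemma mem_nbhd_iff {s t : List ℕ} {N : ℕ} :
    S.c t ∈ S.nbhd s N ↔ t = s ∨ ∃ m, N ≤ m ∧ (s ++ [m]) <+: t := by
  constructor
  · rintro ⟨h1, h2⟩
    obtain ⟨r, rfl⟩ := S.prefix_of_mem_closure s t (subset_closure h1)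
    match r with
    | [] => exact Or.inl (by simp)
    | m :: r' =>
      refine Or.inr ⟨m, ?_, ⟨r', by simp⟩⟩
      by_contra hNm
      push_neg at hNm
      refine h2 ?_
      simp only [Set.mem_iUnion]
      exact ⟨m, Finset.mem_range.2 hNm,
        subset_closure (S.c_mem_of_prefix ⟨r', by simp⟩)⟩
  · rintro (rfl | ⟨m, hNm, hpre⟩)
    · exact S.c_mem_nbhd t N
    · refine ⟨S.c_mem_of_prefix ((List.prefix_append s [m]).trans hpre), ?_⟩
      simp only [Set.mem_iUnion, not_exists]
      intro m' hm' hmem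
      have h1 : s ++ [m'] <+: t := S.prefix_of_mem_closure _ _ hmem
      have h2 := List.prefix_of_prefix_length_le h1 hpre (by simp)
      have : m' = m := by simpa using h2.eq_of_length (by simp)
      have := Finset.mem_range.1 hm'
      omega

end Scheme

end HurewiczAux
namespace HurewiczAux
namespace Scheme
open Set Metric Topology

variable {Y : Type*} [MetricSpace Y] (S : Scheme Y)

lemma dist_lt_of_mem_nbhd {s : List ℕ} {ε : ℝ} (hε : 0 < ε) :
    ∃ N, ∀ t, S.c t ∈ S.nbhd s N → dist (S.c t) (S.c s) < ε := by
  obtain ⟨N, hN⟩ := S.small s ε hε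
  refine ⟨N, fun t ht => ?_⟩
  rcases S.mem_nbhd_iff.1 ht with rfl | ⟨m, hm, hpre⟩
  · simpa using hε
  · exact mem_ball.1 (hN m hm (S.c_mem_of_prefix hpre))

/-- Two schemes with the same index tree have homeomorphic point sets; if the second
is surjective onto its ambient space, the first scheme's point set is homeomorphic to it. -/
theorem homeo_of_surjective {Z : Type*} [MetricSpace Z] (T : Scheme Z)
    (hT : Function.Surjective T.c) : Nonempty (↥(Set.range S.c) ≃ₜ Z) := by
  choose idx hidx using hT
  have hiY' : ∀ d : ↥(Set.range S.c), ∃ t, S.c t = d.1 := fun d => d.2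
  choose iY hiY using hiY'
  -- the maps
  set f : ↥(Set.range S.c) → Z := fun d => T.c (iY d) with hf
  set g : Z → ↥(Set.range S.c) := fun z => ⟨S.c (idx z), Set.mem_range_self _⟩ with hg
  have hfg : ∀ z, f (g z) = z := by
    intro z
    have h1 : S.c (iY (g z)) = S.c (idx z) := hiY _
    have h2 : iY (g z) = idx z := S.c_injective h1
    simp only [hf, h2, hidx]
  have hgf : ∀ d, g (f d) = d := by
    intro d
    have h1 : T.c (idx (T.c (iY d))) = T.c (iY d) := hidx _
    have h2 : idx (T.c (iY d)) = iY d := T.c_injective h1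
    exact Subtype.ext (by simp only [hg, hf, h2, hiY])
  have hcf : Continuous f := by
    rw [continuous_iff_continuousAt]
    intro d
    rw [ContinuousAt, Metric.tendsto_nhds]
    intro ε hε
    obtain ⟨N, hN⟩ := T.small (iY d) ε hε
    have hopen : IsOpen ((Subtype.val : ↥(Set.range S.c) → Y) ⁻¹' S.nbhd (iY d) N) :=
      (S.isOpen_nbhd _ _).preimage continuous_subtype_val
    have hmemd : d ∈ (Subtype.val : ↥(Set.range S.c) → Y) ⁻¹' S.nbhd (iY d) N := by
      have h := S.c_mem_nbhd (iY d) N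
      rw [hiY d] at h
      exact h
    refine Filter.eventually_iff_exists_mem.2 ⟨_, hopen.mem_nhds hmemd, fun d' hd' => ?_⟩
    have hd'' : S.c (iY d') ∈ S.nbhd (iY d) N := by rw [hiY d']; exact hd'
    rcases S.mem_nbhd_iff.1 hd'' with heq | ⟨m, hm, hpre⟩
    · simp only [hf, heq]; simpa using hε
    · exact mem_ball.1 (hN m hm (T.c_mem_of_prefix hpre))
  have hcg : Continuous g := by
    rw [hg]
    refine Continuous.subtype_mk ?_ _
    rw [continuous_iff_continuousAt]
    intro z
    rw [ContinuousAt, Metric.tendsto_nhds]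
    intro ε hε
    obtain ⟨N, hN⟩ := S.small (idx z) ε hε
    have hmemz : z ∈ T.nbhd (idx z) N := by
      have h := T.c_mem_nbhd (idx z) N
      rw [hidx z] at h
      exact h
    refine Filter.eventually_iff_exists_mem.2
      ⟨_, (T.isOpen_nbhd (idx z) N).mem_nhds hmemz, fun z' hz' => ?_⟩
    have hz'' : T.c (idx z') ∈ T.nbhd (idx z) N := by rw [hidx z']; exact hz'
    rcases T.mem_nbhd_iff.1 hz'' with heq | ⟨m, hm, hpre⟩
    · simp only [heq]; simpa using hε
    · exact mem_ball.1 (hN m hm (S.c_mem_of_prefix hpre))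
  exact ⟨⟨⟨f, g, hgf, hfg⟩, hcf, hcg⟩⟩

end Scheme
end HurewiczAux
namespace HurewiczAux
open Set Metric Topology

variable {Y : Type*} [MetricSpace Y]

/-- The data of a non-Baire situation: an increasing sequence of closed nowhere dense
sets covering a nonempty open set. -/
structure Setup (Y : Type*) [MetricSpace Y] where
  F : ℕ → Set Y
  U : Set Y
  closedF : ∀ n, IsClosed (F n)
  intF : ∀ n, interior (F n) = ∅
  openU : IsOpen U
  neU : U.Nonempty
  covU : U ⊆ ⋃ n, F n

variable (P : Setup Y)

/-- A node of the construction on the non-Baire side. -/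
structure XNode (P : Setup Y) where
  k : ℕ
  x : Y
  W : Set Y
  isOpenW : IsOpen W
  memW : x ∈ W
  subU : closure W ⊆ P.U
  disjF : Disjoint (closure W) (P.F k)

namespace XNode

/-- In `U`, every nonempty open set has a point avoiding `F m` and a given point. -/
lemma key_point {W' : Set Y} (hW' : IsOpen W') (hsub : W' ⊆ P.U) (hne : W'.Nonempty)
    (x : Y) (m : ℕ) : ∃ z ∈ W', z ≠ x ∧ z ∉ P.F m := by
  have hx : (W' \ {x}).Nonempty := by
    by_contra h
    rw [Set.not_nonempty_iff_eq_empty, Set.diff_eq_empty] at h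
    obtain ⟨z, hz⟩ := hne
    have hzx : z = x := h hz
    subst hzx
    have hWz : W' = {z} := le_antisymm h (by simpa using hz)
    obtain ⟨n, hn⟩ := Set.mem_iUnion.1 (P.covU (hsub hz))
    have : z ∈ interior (P.F n) :=
      mem_interior.2 ⟨W', by rw [hWz]; simpa using hn, hW', hz⟩
    rw [P.intF n] at this
    exact this.elim
  have h2 : (W' \ {x}) \ P.F m ≠ ∅ := by
    intro h
    rw [Set.diff_eq_empty] at h
    obtain ⟨z, hz⟩ := hx
    have : z ∈ interior (P.F m) :=
      mem_interior.2 ⟨W' \ {x}, h, hW'.sdiff isClosed_singleton, hz⟩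
    rw [P.intF m] at this
    exact this.elim
  obtain ⟨z, hz⟩ := Set.nonempty_iff_ne_empty.2 h2
  exact ⟨z, hz.1.1, hz.1.2, hz.2⟩

variable {P} (d : XNode P)

lemma step (δ : ℝ) (hδ : 0 < δ) :
    ∃ z, (z ∈ d.W ∧ z ≠ d.x ∧ z ∉ P.F (d.k + 1)) ∧ dist z d.x < δ := by
  have hne : (d.W ∩ ball d.x δ).Nonempty := ⟨d.x, d.memW, by simpa using hδ⟩
  obtain ⟨z, hz, hzx, hzF⟩ := key_point P (d.isOpenW.inter isOpen_ball)
    (fun y hy => d.subU (subset_closure hy.1)) hne d.x (d.k + 1)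
  exact ⟨z, ⟨hz.1, hzx, hzF⟩, by simpa using hz.2⟩

/-- Subtype of valid picked points. -/
def Pt : Type _ := {z : Y // z ∈ d.W ∧ z ≠ d.x ∧ z ∉ P.F (d.k + 1)}

noncomputable def pick (δ : ℝ) (hδ : 0 < δ) : d.Pt :=
  ⟨(d.step δ hδ).choose, (d.step δ hδ).choose_spec.1⟩

lemma dist_pick (δ : ℝ) (hδ : 0 < δ) : dist (d.pick δ hδ).1 d.x < δ :=
  (d.step δ hδ).choose_spec.2

lemma pt_dist_pos (z : d.Pt) : 0 < dist z.1 d.x := dist_pos.2 z.2.2.1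

/-- The recursively picked sequence of points converging to `d.x`. -/
noncomputable def pSeq : ℕ → d.Pt
  | 0 => d.pick ((1/2 : ℝ) ^ (d.k + 2)) (by positivity)
  | n+1 => d.pick (min (dist (pSeq n).1 d.x / 2) ((1/2 : ℝ) ^ (d.k + n + 3)))
      (lt_min (by linarith [d.pt_dist_pos (pSeq n)]) (by positivity))

lemma pSeq_zero_lt : dist (d.pSeq 0).1 d.x < (1/2 : ℝ) ^ (d.k + 2) := by
  rw [pSeq]; exact d.dist_pick _ _

lemma pSeq_succ_lt (n : ℕ) : dist (d.pSeq (n+1)).1 d.x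
    < min (dist (d.pSeq n).1 d.x / 2) ((1/2 : ℝ) ^ (d.k + n + 3)) := by
  rw [pSeq]; exact d.dist_pick _ _

lemma pSeq_lt (n : ℕ) : dist (d.pSeq n).1 d.x < (1/2 : ℝ) ^ (d.k + n + 2) := by
  cases n with
  | zero => simpa using d.pSeq_zero_lt
  | succ n =>
    have := d.pSeq_succ_lt n
    have h2 : (1/2 : ℝ) ^ (d.k + n + 3) = (1/2) ^ (d.k + (n+1) + 2) := by ring_nf
    calc dist (d.pSeq (n+1)).1 d.x < (1/2 : ℝ) ^ (d.k + n + 3) :=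
          lt_of_lt_of_le this (min_le_right _ _)
      _ = _ := h2

lemma pSeq_half (n : ℕ) :
    dist (d.pSeq (n+1)).1 d.x < dist (d.pSeq n).1 d.x / 2 :=
  lt_of_lt_of_le (d.pSeq_succ_lt n) (min_le_left _ _)

lemma pSeq_mono {m n : ℕ} (h : m < n) :
    dist (d.pSeq n).1 d.x < dist (d.pSeq m).1 d.x / 2 := by
  induction n with
  | zero => omega
  | succ n ih =>
    rcases Nat.lt_succ_iff_lt_or_eq.1 h with h' | h'
    · have := ih h'
      have h2 := d.pSeq_half n
      have h3 := d.pt_dist_pos (d.pSeq n)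
      linarith
    · subst h'; exact d.pSeq_half m

/-- Existence of the children family for each node. -/
lemma exists_children : ∃ ch : ℕ → XNode P,
    (∀ n, (ch n).k = d.k + 1) ∧
    (∀ n, closure (ch n).W ⊆ d.W) ∧
    (∀ n, d.x ∉ closure (ch n).W) ∧
    (∀ m n, m ≠ n → Disjoint (closure (ch m).W) (closure (ch n).W)) ∧
    (∀ n, (ch n).W ⊆ Metric.ball d.x ((1/2) ^ (d.k + n))) := by
  have hrad : ∀ n : ℕ, ∃ ρ : ℝ, 0 < ρ ∧ ρ ≤ dist (d.pSeq n).1 d.x / 4 ∧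
      Metric.closedBall (d.pSeq n).1 ρ ⊆ d.W ∧
      Disjoint (Metric.closedBall (d.pSeq n).1 ρ) (P.F (d.k + 1)) := by
    intro n
    obtain ⟨ρ₁, hρ₁, hball₁⟩ := Metric.isOpen_iff.1 d.isOpenW _ (d.pSeq n).2.1
    obtain ⟨ρ₂, hρ₂, hball₂⟩ := Metric.isOpen_iff.1 (P.closedF (d.k+1)).isOpen_compl _
      (d.pSeq n).2.2.2
    have hdpos := d.pt_dist_pos (d.pSeq n)
    have hminpos : 0 < min (min ρ₁ ρ₂) (dist (d.pSeq n).1 d.x / 2) :=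
      lt_min (lt_min hρ₁ hρ₂) (by linarith)
    set ρ := min (min ρ₁ ρ₂) (dist (d.pSeq n).1 d.x / 2) / 2 with hρdef
    have h1 := min_le_left (min ρ₁ ρ₂) (dist (d.pSeq n).1 d.x / 2)
    have h2 := min_le_right (min ρ₁ ρ₂) (dist (d.pSeq n).1 d.x / 2)
    have h3 := min_le_left ρ₁ ρ₂
    have h4 := min_le_right ρ₁ ρ₂
    refine ⟨ρ, by positivity, by rw [hρdef]; linarith, ?_, ?_⟩
    · refine subset_trans ?_ hball₁
      intro z hz
      rw [Metric.mem_closedBall] at hz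
      exact Metric.mem_ball.2 (by rw [hρdef] at hz; linarith)
    · rw [Set.disjoint_left]
      intro z hz hzF
      rw [Metric.mem_closedBall] at hz
      exact hball₂ (Metric.mem_ball.2 (by rw [hρdef] at hz; linarith)) hzF
  choose ρ hρpos hρle hρW hρF using hrad
  have hsubU : ∀ n, closure (Metric.ball (d.pSeq n).1 (ρ n)) ⊆ P.U := fun n =>
    (Metric.closure_ball_subset_closedBall.trans (hρW n)).trans
      (subset_closure.trans d.subU)
  have hdisjF : ∀ n, Disjoint (closure (Metric.ball (d.pSeq n).1 (ρ n))) (P.F (d.k + 1)) :=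
    fun n => (hρF n).mono_left Metric.closure_ball_subset_closedBall
  refine ⟨fun n => ⟨d.k + 1, (d.pSeq n).1, Metric.ball (d.pSeq n).1 (ρ n),
    Metric.isOpen_ball, Metric.mem_ball_self (hρpos n), hsubU n, hdisjF n⟩,
    fun n => rfl, ?_, ?_, ?_, ?_⟩
  · intro n
    exact Metric.closure_ball_subset_closedBall.trans (hρW n)
  · intro n hmem
    have h1 : dist d.x (d.pSeq n).1 ≤ ρ n :=
      Metric.mem_closedBall.1 (Metric.closure_ball_subset_closedBall hmem)
    have h2 := hρle n
    have h3 := d.pt_dist_pos (d.pSeq n)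
    rw [dist_comm] at h1
    linarith
  · have hpair : ∀ m n, m < n → Disjoint (closure (Metric.ball (d.pSeq m).1 (ρ m)))
        (closure (Metric.ball (d.pSeq n).1 (ρ n))) := by
      intro m n hmn
      rw [Set.disjoint_left]
      intro z hzm hzn
      have h1 : dist z (d.pSeq m).1 ≤ ρ m :=
        Metric.mem_closedBall.1 (Metric.closure_ball_subset_closedBall hzm)
      have h2 : dist z (d.pSeq n).1 ≤ ρ n :=
        Metric.mem_closedBall.1 (Metric.closure_ball_subset_closedBall hzn)
      have h3 : dist (d.pSeq m).1 d.x ≤ dist (d.pSeq m).1 (d.pSeq n).1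
          + dist (d.pSeq n).1 d.x := dist_triangle _ _ _
      have h4 : dist (d.pSeq m).1 (d.pSeq n).1 ≤ dist (d.pSeq m).1 z
          + dist z (d.pSeq n).1 := dist_triangle _ _ _
      rw [dist_comm (d.pSeq m).1 z] at h4
      have h5 := d.pSeq_mono hmn
      have h6 := hρle m
      have h7 := hρle n
      have h8 := d.pt_dist_pos (d.pSeq m)
      linarith
    intro m n hmn
    rcases lt_or_gt_of_ne hmn with h | h
    · exact hpair m n h
    · exact (hpair n m h).symm
  · intro n z hz
    rw [Metric.mem_ball] at hz ⊢
    have h1 : dist z d.x ≤ dist z (d.pSeq n).1 + dist (d.pSeq n).1 d.x :=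
      dist_triangle _ _ _
    have h2 := d.pSeq_lt n
    have h3 := hρle n
    have h4 : (1/2 : ℝ) ^ (d.k + n + 2) = (1/2) ^ (d.k + n) / 4 := by ring
    have h5 : (0:ℝ) < (1/2) ^ (d.k + n) := by positivity
    linarith

end XNode
end HurewiczAux
namespace HurewiczAux
open Set Metric Topology

variable {Y : Type*} [MetricSpace Y] (P : Setup Y)

lemma exists_root : ∃ d : XNode P, d.k = 0 := by
  obtain ⟨x₀, hx₀U, _, hx₀F⟩ := XNode.key_point P P.openU subset_rfl P.neU
    (Classical.arbitrary (α := Y) (h := ⟨P.neU.choose⟩)) 0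
  obtain ⟨ρ₁, hρ₁, hball₁⟩ := Metric.isOpen_iff.1 P.openU _ hx₀U
  obtain ⟨ρ₂, hρ₂, hball₂⟩ := Metric.isOpen_iff.1 (P.closedF 0).isOpen_compl _ hx₀F
  set ρ := min ρ₁ ρ₂ / 2 with hρdef
  have h1 := min_le_left ρ₁ ρ₂
  have h2 := min_le_right ρ₁ ρ₂
  have hminpos : 0 < min ρ₁ ρ₂ := lt_min hρ₁ hρ₂
  have hcb : Metric.closedBall x₀ ρ ⊆ Metric.ball x₀ (min ρ₁ ρ₂) := by
    intro z hz
    rw [Metric.mem_closedBall] at hz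
    exact Metric.mem_ball.2 (by rw [hρdef] at hz; linarith)
  refine ⟨⟨0, x₀, Metric.ball x₀ ρ, Metric.isOpen_ball,
    Metric.mem_ball_self (by positivity), ?_, ?_⟩, rfl⟩
  · exact Metric.closure_ball_subset_closedBall.trans
      (hcb.trans (fun z hz => hball₁ (Metric.mem_ball.2
        (lt_of_lt_of_le (Metric.mem_ball.1 hz) h1))))
  · refine Set.disjoint_left.2 fun z hz hzF => ?_
    have := hcb (Metric.closure_ball_subset_closedBall hz)
    exact hball₂ (Metric.mem_ball.2 (lt_of_lt_of_le (Metric.mem_ball.1 this) h2)) hzF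

noncomputable def rootNode : XNode P := (exists_root P).choose

lemma rootNode_k : (rootNode P).k = 0 := (exists_root P).choose_spec

noncomputable def childFun (d : XNode P) : ℕ → XNode P := d.exists_children.choose

lemma childFun_spec (d : XNode P) :
    (∀ n, (childFun P d n).k = d.k + 1) ∧
    (∀ n, closure (childFun P d n).W ⊆ d.W) ∧
    (∀ n, d.x ∉ closure (childFun P d n).W) ∧
    (∀ m n, m ≠ n → Disjoint (closure (childFun P d m).W) (closure (childFun P d n).W)) ∧
    (∀ n, (childFun P d n).W ⊆ Metric.ball d.x ((1/2) ^ (d.k + n))) :=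
  d.exists_children.choose_spec

/-- The tree of nodes, indexed by reversed lists. -/
noncomputable def nodeAux : List ℕ → XNode P
  | [] => rootNode P
  | n :: s => childFun P (nodeAux s) n

noncomputable def node (s : List ℕ) : XNode P := nodeAux P s.reverse

lemma node_nil : node P [] = rootNode P := rfl

lemma node_append (s : List ℕ) (n : ℕ) :
    node P (s ++ [n]) = childFun P (node P s) n := by
  simp only [node, List.reverse_append, List.reverse_cons, List.reverse_nil,
    List.nil_append, List.singleton_append, nodeAux]

lemma node_k (s : List ℕ) : (node P s).k = s.length := by
  induction s using List.reverseRecOn with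
  | nil => exact rootNode_k P
  | append_singleton s n ih =>
    rw [node_append, (childFun_spec P (node P s)).1 n, ih]
    simp

/-- The scheme on the non-Baire side. -/
noncomputable def xScheme : Scheme Y where
  V s := (node P s).W
  c s := (node P s).x
  isOpenV s := (node P s).isOpenW
  mem_cell s := (node P s).memW
  closure_subset s n := by rw [node_append]; exact (childFun_spec P (node P s)).2.1 n
  notmem s n := by rw [node_append]; exact (childFun_spec P (node P s)).2.2.1 n
  disj s m n h := by
    rw [node_append, node_append]; exact (childFun_spec P (node P s)).2.2.2.1 m n h
  small s ε hε := by
    obtain ⟨N, hN⟩ : ∃ N : ℕ, ((1:ℝ)/2) ^ ((node P s).k + N) < ε := by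
      obtain ⟨N, hN⟩ := exists_pow_lt_of_lt_one hε (by norm_num : (1:ℝ)/2 < 1)
      exact ⟨N, lt_of_le_of_lt (pow_le_pow_of_le_one (by norm_num) (by norm_num)
        (by omega)) hN⟩
    refine ⟨N, fun n hn => ?_⟩
    rw [node_append]
    refine subset_trans ((childFun_spec P (node P s)).2.2.2.2 n) ?_
    intro z hz
    rw [Metric.mem_ball] at hz ⊢
    refine lt_of_lt_of_le (lt_of_lt_of_le hz ?_) (le_of_lt hN)
    exact pow_le_pow_of_le_one (by norm_num) (by norm_num) (by omega)

lemma xScheme_closure_subU (s : List ℕ) : closure ((xScheme P).V s) ⊆ P.U :=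
  (node P s).subU

lemma xScheme_disjF (s : List ℕ) :
    Disjoint (closure ((xScheme P).V s)) (P.F s.length) := by
  have := (node P s).disjF
  rwa [node_k P s] at this

/-- The point set of the scheme on the non-Baire side is closed. -/
theorem xScheme_closed_range : IsClosed (Set.range (xScheme P).c) := by
  set S := xScheme P with hS
  rw [← closure_subset_iff_isClosed]
  intro y hy
  by_contra hyD
  have key : ∀ dth : ℕ, ∃ s : List ℕ, s.length = dth ∧
      y ∈ closure (Set.range S.c ∩ closure (S.V s)) := by
    intro dth
    induction dth with
    | zero =>
      refine ⟨[], rfl, ?_⟩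
      have h1 : Set.range S.c ⊆ closure (S.V []) := by
        rintro _ ⟨t, rfl⟩
        exact subset_closure (S.c_mem_of_prefix List.nil_prefix)
      rwa [Set.inter_eq_left.2 h1]
    | succ dth ih =>
      obtain ⟨s, hlen, hmem⟩ := ih
      have hyc : y ≠ S.c s := fun h => hyD (h ▸ Set.mem_range_self s)
      have hsplit : Set.range S.c ∩ closure (S.V s) ⊆
          {S.c s} ∪ ⋃ n, (Set.range S.c ∩ closure (S.V (s ++ [n]))) := by
        rintro z ⟨⟨t, rfl⟩, hz⟩
        obtain ⟨r, rfl⟩ := S.prefix_of_mem_closure s t hz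
        match r with
        | [] => exact Or.inl (by simp)
        | n :: r' =>
          refine Or.inr (Set.mem_iUnion.2 ⟨n, Set.mem_range_self _,
            subset_closure (S.c_mem_of_prefix ⟨r', by simp⟩)⟩)
      have hy2 : y ∈ closure ({S.c s} ∪ ⋃ n, (Set.range S.c ∩ closure (S.V (s ++ [n])))) :=
        closure_mono hsplit hmem
      rw [closure_union, isClosed_singleton.closure_eq] at hy2
      have hy3 : y ∈ closure (⋃ n, (Set.range S.c ∩ closure (S.V (s ++ [n])))) := by
        rcases hy2 with h | h
        · exact absurd (Set.mem_singleton_iff.1 h) hyc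
        · exact h
      set δ := dist y (S.c s) with hδdef
      have hδ : 0 < δ := dist_pos.2 hyc
      obtain ⟨N, hN⟩ := S.small s (δ/2) (by linarith)
      have hsplit2 : (⋃ n, (Set.range S.c ∩ closure (S.V (s ++ [n])))) ⊆
          (⋃ n ∈ Finset.range N, (Set.range S.c ∩ closure (S.V (s ++ [n])))) ∪
            Metric.closedBall (S.c s) (δ/2) := by
        intro z hz
        obtain ⟨n, hzn⟩ := Set.mem_iUnion.1 hz
        rcases lt_or_ge n N with h | h
        · exact Or.inl (Set.mem_iUnion₂.2 ⟨n, Finset.mem_range.2 h, hzn⟩)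
        · refine Or.inr ?_
          have h1 : closure (S.V (s ++ [n])) ⊆ Metric.closedBall (S.c s) (δ/2) :=
            (closure_mono (hN n h)).trans Metric.closure_ball_subset_closedBall
          exact h1 hzn.2
      have hy4 := closure_mono hsplit2 hy3
      rw [closure_union, Metric.isClosed_closedBall.closure_eq] at hy4
      have hy5 : y ∉ Metric.closedBall (S.c s) (δ/2) := by
        rw [Metric.mem_closedBall]
        push_neg
        rw [← hδdef]
        linarith
      have hy6 : y ∈ closure (⋃ n ∈ Finset.range N, (Set.range S.c ∩ closure (S.V (s ++ [n])))) := by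
        rcases hy4 with h | h
        · exact h
        · exact absurd h hy5
      rw [Finset.closure_biUnion] at hy6
      obtain ⟨n, -, hn⟩ := Set.mem_iUnion₂.1 hy6
      exact ⟨s ++ [n], by simp [hlen], hn⟩
  have hF : ∀ dth : ℕ, y ∉ P.F dth := by
    intro dth hyF
    obtain ⟨s, hlen, hmem⟩ := key dth
    have h1 : y ∈ closure (S.V s) := by
      have := closure_mono (Set.inter_subset_right :
        Set.range S.c ∩ closure (S.V s) ⊆ closure (S.V s)) hmem
      rwa [closure_closure] at this
    exact Set.disjoint_left.1 (hlen ▸ xScheme_disjF P s) h1 hyF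
  have hU : y ∈ P.U := by
    obtain ⟨s, hlen, hmem⟩ := key 0
    have h1 : y ∈ closure (S.V s) := by
      have := closure_mono (Set.inter_subset_right :
        Set.range S.c ∩ closure (S.V s) ⊆ closure (S.V s)) hmem
      rwa [closure_closure] at this
    exact xScheme_closure_subU P s h1
  obtain ⟨n, hn⟩ := Set.mem_iUnion.1 (P.covU hU)
  exact hF n hn

end HurewiczAux
namespace HurewiczAux
open Set Metric Topology

noncomputable def eQ : ℚ ≃ ℕ := Denumerable.eqv ℚ

lemma dist_ne_irrational (q x : ℚ) {r : ℝ} (hr : Irrational r) : dist q x ≠ r := by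
  intro h
  refine hr ⟨|q - x|, ?_⟩
  rw [← h, Rat.dist_eq]
  push_cast
  ring_nf

lemma qmin_ex {A : Set ℚ} (h : A.Nonempty) : ∃ n, eQ.symm n ∈ A :=
  ⟨eQ h.choose, by simpa using h.choose_spec⟩

open Classical in
noncomputable def qmin (A : Set ℚ) (h : A.Nonempty) : ℚ :=
  eQ.symm (@Nat.find _ (Classical.decPred _) (qmin_ex h))

open Classical in
lemma qmin_mem {A : Set ℚ} (h : A.Nonempty) : qmin A h ∈ A :=
  @Nat.find_spec _ (Classical.decPred _) (qmin_ex h)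

open Classical in
lemma qmin_le {A : Set ℚ} (h : A.Nonempty) {q : ℚ} (hq : q ∈ A) :
    eQ (qmin A h) ≤ eQ q := by
  rw [qmin, Equiv.apply_symm_apply]
  exact @Nat.find_min' _ (Classical.decPred _) (qmin_ex h) _ (by simpa using hq)

/-- A node of the construction on the rational side. -/
structure QNode where
  x : ℚ
  W : Set ℚ
  isOpenW : IsOpen W
  isClosedW : IsClosed W
  memW : x ∈ W
  perfectW : ∀ q ∈ W, ∀ δ : ℝ, 0 < δ → ∃ q' ∈ W, q' ≠ q ∧ dist q' q < δ
  minW : ∀ q ∈ W, eQ x ≤ eQ q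

namespace QNode

variable (d : QNode)

lemma step (δ : ℝ) (hδ : 0 < δ) :
    ∃ z, (z ∈ d.W ∧ z ≠ d.x) ∧ dist z d.x < δ := by
  obtain ⟨q', hq', hne, hd⟩ := d.perfectW d.x d.memW δ hδ
  exact ⟨q', ⟨hq', hne⟩, hd⟩

def Pt : Type _ := {z : ℚ // z ∈ d.W ∧ z ≠ d.x}

noncomputable def pick (δ : ℝ) (hδ : 0 < δ) : d.Pt :=
  ⟨(d.step δ hδ).choose, (d.step δ hδ).choose_spec.1⟩

lemma dist_pick (δ : ℝ) (hδ : 0 < δ) : dist (d.pick δ hδ).1 d.x < δ :=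
  (d.step δ hδ).choose_spec.2

lemma pt_dist_pos (z : d.Pt) : 0 < dist z.1 d.x := dist_pos.2 z.2.2

noncomputable def pSeq : ℕ → d.Pt
  | 0 => d.pick ((1/2 : ℝ) ^ 1) (by positivity)
  | n+1 => d.pick (min (dist (pSeq n).1 d.x) ((1/2 : ℝ) ^ (n + 2)))
      (lt_min (d.pt_dist_pos (pSeq n)) (by positivity))

lemma pSeq_lt (n : ℕ) : dist (d.pSeq n).1 d.x < (1/2 : ℝ) ^ (n + 1) := by
  cases n with
  | zero => rw [pSeq]; exact d.dist_pick _ _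
  | succ n =>
    rw [pSeq]
    exact lt_of_lt_of_le (d.dist_pick _ _) (by
      refine le_trans (min_le_right _ _) (le_of_eq ?_); ring_nf)

lemma pSeq_dec (n : ℕ) : dist (d.pSeq (n+1)).1 d.x < dist (d.pSeq n).1 d.x := by
  rw [pSeq]
  exact lt_of_lt_of_le (d.dist_pick _ _) (min_le_left _ _)

lemma exists_radii : ∃ r : ℕ → ℝ, ∀ n, Irrational (r n) ∧
    dist (d.pSeq (n+1)).1 d.x < r n ∧ r n < dist (d.pSeq n).1 d.x := by
  have h : ∀ n : ℕ, ∃ r : ℝ, Irrational r ∧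
      dist (d.pSeq (n+1)).1 d.x < r ∧ r < dist (d.pSeq n).1 d.x :=
    fun n => exists_irrational_btwn (d.pSeq_dec n)
  choose r hr using h
  exact ⟨r, hr⟩

noncomputable def rad : ℕ → ℝ := d.exists_radii.choose

lemma rad_irr (n : ℕ) : Irrational (d.rad n) := (d.exists_radii.choose_spec n).1

lemma rad_gt (n : ℕ) : dist (d.pSeq (n+1)).1 d.x < d.rad n :=
  (d.exists_radii.choose_spec n).2.1

lemma rad_lt (n : ℕ) : d.rad n < dist (d.pSeq n).1 d.x :=
  (d.exists_radii.choose_spec n).2.2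

lemma rad_pos (n : ℕ) : 0 < d.rad n :=
  lt_trans (d.pt_dist_pos (d.pSeq (n+1))) (d.rad_gt n)

lemma rad_small (n : ℕ) : d.rad n < (1/2 : ℝ) ^ (n + 1) :=
  lt_trans (d.rad_lt n) (d.pSeq_lt n)

lemma rad_anti : StrictAnti d.rad :=
  strictAnti_nat_of_succ_lt fun n => lt_trans (d.rad_lt (n+1)) (d.rad_gt n)

/-- The `n`-th child cell of the node. -/
noncomputable def chW : ℕ → Set ℚ
  | 0 => d.W ∩ (fun q => dist q d.x) ⁻¹' (Set.Ioi (d.rad 0))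
  | n+1 => d.W ∩ (fun q => dist q d.x) ⁻¹' (Set.Ioo (d.rad (n+1)) (d.rad n))

lemma cont_dist : Continuous fun q : ℚ => dist q d.x :=
  continuous_id.dist continuous_const

lemma chW_isOpen (n : ℕ) : IsOpen (d.chW n) := by
  cases n with
  | zero => exact d.isOpenW.inter (isOpen_Ioi.preimage d.cont_dist)
  | succ n => exact d.isOpenW.inter (isOpen_Ioo.preimage d.cont_dist)

lemma chW_isClosed (n : ℕ) : IsClosed (d.chW n) := by
  cases n with
  | zero =>
    have : d.chW 0 = d.W ∩ (fun q => dist q d.x) ⁻¹' (Set.Ici (d.rad 0)) := by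
      ext q
      simp only [chW, Set.mem_inter_iff, Set.mem_preimage, Set.mem_Ioi, Set.mem_Ici]
      refine and_congr_right fun _ => ⟨le_of_lt, fun h => ?_⟩
      exact lt_of_le_of_ne h (Ne.symm (dist_ne_irrational q d.x (d.rad_irr 0)))
    rw [this]
    exact d.isClosedW.inter (isClosed_Ici.preimage d.cont_dist)
  | succ n =>
    have : d.chW (n+1) = d.W ∩ (fun q => dist q d.x) ⁻¹' (Set.Icc (d.rad (n+1)) (d.rad n)) := by
      ext q
      simp only [chW, Set.mem_inter_iff, Set.mem_preimage, Set.mem_Ioo, Set.mem_Icc]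
      refine and_congr_right fun _ => ⟨fun h => ⟨le_of_lt h.1, le_of_lt h.2⟩, fun h => ⟨?_, ?_⟩⟩
      · exact lt_of_le_of_ne h.1 (Ne.symm (dist_ne_irrational q d.x (d.rad_irr (n+1))))
      · exact lt_of_le_of_ne h.2 (dist_ne_irrational q d.x (d.rad_irr n))
    rw [this]
    exact d.isClosedW.inter (isClosed_Icc.preimage d.cont_dist)

lemma chW_subset (n : ℕ) : d.chW n ⊆ d.W := by
  cases n with
  | zero => exact Set.inter_subset_left
  | succ n => exact Set.inter_subset_left

lemma chW_lower {n : ℕ} {q : ℚ} (hq : q ∈ d.chW n) : d.rad n < dist q d.x := by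
  cases n with
  | zero => exact hq.2
  | succ n => exact hq.2.1

lemma chW_upper {n : ℕ} {q : ℚ} (hq : q ∈ d.chW (n+1)) : dist q d.x < d.rad n := hq.2.2

lemma pSeq_mem_chW (n : ℕ) : (d.pSeq n).1 ∈ d.chW n := by
  cases n with
  | zero => exact ⟨(d.pSeq 0).2.1, d.rad_lt 0⟩
  | succ n => exact ⟨(d.pSeq (n+1)).2.1, d.rad_lt (n+1), d.rad_gt n⟩

lemma chW_nonempty (n : ℕ) : (d.chW n).Nonempty := ⟨_, d.pSeq_mem_chW n⟩

lemma notmem_chW (n : ℕ) : d.x ∉ d.chW n := by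
  intro h
  have := d.chW_lower h
  rw [dist_self] at this
  exact absurd this (not_lt.2 (le_of_lt (d.rad_pos n)))

lemma chW_disj {m n : ℕ} (h : m ≠ n) : Disjoint (d.chW m) (d.chW n) := by
  have key : ∀ a b, a < b → Disjoint (d.chW a) (d.chW b) := by
    intro a b hab
    rw [Set.disjoint_left]
    intro z hza hzb
    obtain ⟨b', rfl⟩ : ∃ b', b = b' + 1 := ⟨b - 1, by omega⟩
    have h1 : d.rad a < dist z d.x := d.chW_lower hza
    have h2 : dist z d.x < d.rad b' := d.chW_upper hzb
    have h3 : d.rad b' ≤ d.rad a := d.rad_anti.antitone (by omega)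
    linarith
  rcases lt_or_gt_of_ne h with h' | h'
  · exact key m n h'
  · exact (key n m h').symm

lemma chW_small (n : ℕ) : d.chW (n+1) ⊆ Metric.ball d.x ((1/2 : ℝ) ^ (n+1)) := by
  intro z hz
  rw [Metric.mem_ball]
  exact lt_trans (d.chW_upper hz) (d.rad_small n)

lemma chW_union : (⋃ n, d.chW n) = d.W \ {d.x} := by
  apply le_antisymm
  · intro z hz
    obtain ⟨n, hn⟩ := Set.mem_iUnion.1 hz
    refine ⟨d.chW_subset n hn, ?_⟩
    intro h
    rw [Set.mem_singleton_iff] at h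
    subst h
    exact d.notmem_chW n hn
  · rintro z ⟨hzW, hzx⟩
    rw [Set.mem_singleton_iff] at hzx
    have hdz : 0 < dist z d.x := dist_pos.2 hzx
    have hex : ∃ n, d.rad n < dist z d.x := by
      obtain ⟨N, hN⟩ := exists_pow_lt_of_lt_one hdz (by norm_num : (1:ℝ)/2 < 1)
      exact ⟨N, lt_trans (d.rad_small N) (lt_of_le_of_lt
        (pow_le_pow_of_le_one (by norm_num) (by norm_num) (by omega)) hN)⟩
    set n₀ := Nat.find hex with hn₀
    have hspec : d.rad n₀ < dist z d.x := Nat.find_spec hex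
    rw [Set.mem_iUnion]
    rcases Nat.eq_zero_or_pos (Nat.find hex) with h0 | hpos
    · exact ⟨0, hzW, by have := Nat.find_spec hex; rwa [h0] at this⟩
    · obtain ⟨m, hm⟩ : ∃ m, Nat.find hex = m + 1 := ⟨Nat.find hex - 1, by omega⟩
      have hspec : d.rad (m+1) < dist z d.x := by
        have := Nat.find_spec hex; rwa [hm] at this
      have hmin : ¬ d.rad m < dist z d.x := Nat.find_min hex (by omega)
      push_neg at hmin
      exact ⟨m+1, hzW, hspec,
        lt_of_le_of_ne hmin (dist_ne_irrational z d.x (d.rad_irr m))⟩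

lemma chW_perfect (n : ℕ) :
    ∀ q ∈ d.chW n, ∀ δ : ℝ, 0 < δ → ∃ q' ∈ d.chW n, q' ≠ q ∧ dist q' q < δ := by
  intro q hq δ hδ
  cases n with
  | zero =>
    have hql : d.rad 0 < dist q d.x := hq.2
    obtain ⟨q', hq'W, hq'ne, hq'd⟩ := d.perfectW q hq.1
      (min δ (dist q d.x - d.rad 0)) (lt_min hδ (by linarith))
    have h2 : dist q' q < dist q d.x - d.rad 0 := lt_of_lt_of_le hq'd (min_le_right _ _)
    have htri : dist q d.x ≤ dist q q' + dist q' d.x := dist_triangle _ _ _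
    rw [dist_comm q q'] at htri
    refine ⟨q', ⟨hq'W, ?_⟩, hq'ne, lt_of_lt_of_le hq'd (min_le_left _ _)⟩
    show d.rad 0 < dist q' d.x
    linarith
  | succ m =>
    have hql : d.rad (m+1) < dist q d.x := hq.2.1
    have hqu : dist q d.x < d.rad m := hq.2.2
    obtain ⟨q', hq'W, hq'ne, hq'd⟩ := d.perfectW q hq.1
      (min δ (min (dist q d.x - d.rad (m+1)) (d.rad m - dist q d.x)))
      (lt_min hδ (lt_min (by linarith) (by linarith)))
    have h2 : dist q' q < dist q d.x - d.rad (m+1) :=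
      lt_of_lt_of_le hq'd ((min_le_right _ _).trans (min_le_left _ _))
    have h3 : dist q' q < d.rad m - dist q d.x :=
      lt_of_lt_of_le hq'd ((min_le_right _ _).trans (min_le_right _ _))
    have htri : dist q d.x ≤ dist q q' + dist q' d.x := dist_triangle _ _ _
    have htri2 : dist q' d.x ≤ dist q' q + dist q d.x := dist_triangle _ _ _
    rw [dist_comm q q'] at htri
    exact ⟨q', ⟨hq'W, by constructor <;> linarith⟩, hq'ne,
      lt_of_lt_of_le hq'd (min_le_left _ _)⟩

/-- The children nodes. -/
noncomputable def child (n : ℕ) : QNode where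
  x := qmin (d.chW n) (d.chW_nonempty n)
  W := d.chW n
  isOpenW := d.chW_isOpen n
  isClosedW := d.chW_isClosed n
  memW := qmin_mem _
  perfectW := d.chW_perfect n
  minW := fun q hq => qmin_le _ hq

@[simp] lemma child_W (n : ℕ) : (d.child n).W = d.chW n := rfl

end QNode
end HurewiczAux
namespace HurewiczAux
open Set Metric Topology

/-- The root node on the rational side. -/
noncomputable def qRoot : QNode where
  x := eQ.symm 0
  W := Set.univ
  isOpenW := isOpen_univ
  isClosedW := isClosed_univ
  memW := Set.mem_univ _
  perfectW := by
    intro q _ δ hδ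
    obtain ⟨η, hη0, hηδ⟩ := exists_rat_btwn hδ
    have hη0' : (0:ℚ) < η := by exact_mod_cast hη0
    refine ⟨q + η, Set.mem_univ _, ne_of_gt (lt_add_of_pos_right q hη0'), ?_⟩
    rw [Rat.dist_eq]
    push_cast
    rw [add_sub_cancel_left, abs_of_pos hη0]
    exact hηδ
  minW := fun q _ => by simp

noncomputable def qNodeAux : List ℕ → QNode
  | [] => qRoot
  | n :: s => (qNodeAux s).child n

noncomputable def qNode (s : List ℕ) : QNode := qNodeAux s.reverse

lemma qNode_nil : qNode [] = qRoot := rfl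

lemma qNode_append (s : List ℕ) (n : ℕ) :
    qNode (s ++ [n]) = (qNode s).child n := by
  simp only [qNode, List.reverse_append, List.reverse_cons, List.reverse_nil,
    List.nil_append, List.singleton_append, qNodeAux]

/-- The scheme on the rational side. -/
noncomputable def qScheme : Scheme ℚ where
  V s := (qNode s).W
  c s := (qNode s).x
  isOpenV s := (qNode s).isOpenW
  mem_cell s := (qNode s).memW
  closure_subset s n := by
    rw [qNode_append, ((qNode s).child n).isClosedW.closure_eq]
    exact (qNode s).chW_subset n
  notmem s n := by
    rw [qNode_append, ((qNode s).child n).isClosedW.closure_eq]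
    exact (qNode s).notmem_chW n
  disj s m n h := by
    rw [qNode_append, qNode_append, ((qNode s).child m).isClosedW.closure_eq,
      ((qNode s).child n).isClosedW.closure_eq]
    exact (qNode s).chW_disj h
  small s ε hε := by
    obtain ⟨M, hM⟩ := exists_pow_lt_of_lt_one hε (by norm_num : (1:ℝ)/2 < 1)
    refine ⟨M + 1, fun n hn => ?_⟩
    rw [qNode_append]
    obtain ⟨m, rfl⟩ : ∃ m, n = m + 1 := ⟨n - 1, by omega⟩
    refine subset_trans ((qNode s).chW_small m) ?_
    intro z hz
    rw [Metric.mem_ball] at hz ⊢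
    refine lt_of_lt_of_le hz (le_trans ?_ (le_of_lt hM))
    exact pow_le_pow_of_le_one (by norm_num) (by norm_num) (by omega)

lemma qScheme_exhaust (s : List ℕ) :
    qScheme.V s \ {qScheme.c s} = ⋃ n, qScheme.V (s ++ [n]) := by
  show (qNode s).W \ {(qNode s).x} = ⋃ n, (qNode (s ++ [n])).W
  rw [← (qNode s).chW_union]
  exact Set.iUnion_congr fun n => (congrArg QNode.W (qNode_append s n)).symm

lemma qScheme_min (s : List ℕ) {q : ℚ} (h : q ∈ qScheme.V s) :
    eQ (qScheme.c s) ≤ eQ q := (qNode s).minW q h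

lemma qScheme_V_nil : qScheme.V [] = Set.univ := rfl

theorem qScheme_surjective : Function.Surjective qScheme.c := by
  intro q
  by_contra hq
  push_neg at hq
  have hstep : ∀ s : List ℕ, q ∈ qScheme.V s → ∃ n, q ∈ qScheme.V (s ++ [n]) := by
    intro s hs
    have hne : q ∉ ({qScheme.c s} : Set ℚ) := fun h =>
      hq s (Set.mem_singleton_iff.1 h).symm
    have : q ∈ qScheme.V s \ {qScheme.c s} := ⟨hs, hne⟩
    rw [qScheme_exhaust] at this
    exact Set.mem_iUnion.1 this
  choose nx hnx using hstep
  let t : ℕ → {s : List ℕ // q ∈ qScheme.V s} := fun n =>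
    Nat.rec ⟨[], by rw [qScheme_V_nil]; trivial⟩
      (fun _ ih => ⟨ih.1 ++ [nx ih.1 ih.2], hnx ih.1 ih.2⟩) n
  have ht : ∀ n, (t (n+1)).1 = (t n).1 ++ [nx (t n).1 (t n).2] := fun n => rfl
  have hlen : ∀ n, ((t n).1).length = n := by
    intro n
    induction n with
    | zero => rfl
    | succ n ih => rw [ht n]; simp [ih]
  have hinj : Function.Injective fun n => eQ (qScheme.c (t n).1) := by
    intro a b hab
    have h1 : qScheme.c (t a).1 = qScheme.c (t b).1 := eQ.injective hab
    have h2 : (t a).1 = (t b).1 := qScheme.c_injective h1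
    have := congrArg List.length h2
    rwa [hlen, hlen] at this
  have hbd : ∀ n, eQ (qScheme.c (t n).1) ≤ eQ q := fun n => qScheme_min _ (t n).2
  obtain ⟨a, b, hab, heq⟩ := Finite.exists_ne_map_eq_of_infinite
    (fun n : ℕ => (⟨eQ (qScheme.c (t n).1), Nat.lt_succ_of_le (hbd n)⟩ : Fin (eQ q + 1)))
  exact hab (hinj (by simpa using congrArg Fin.val heq))

end HurewiczAux
namespace HurewiczAux
open Set Metric Topology

lemma baireSpace_of_homeomorph {α β : Type*} [TopologicalSpace α] [TopologicalSpace β]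
    (h : α ≃ₜ β) [BaireSpace α] : BaireSpace β := by
  constructor
  intro f ho hd
  have h1 : ∀ n, IsOpen (h ⁻¹' f n) := fun n => (ho n).preimage h.continuous
  have h2 : ∀ n, Dense (h ⁻¹' f n) := by
    intro n
    rw [dense_iff_closure_eq, ← h.preimage_closure, (hd n).closure_eq, Set.preimage_univ]
  have h3 : Dense (⋂ n, h ⁻¹' f n) := dense_iInter_of_isOpen h1 h2
  rw [← Set.preimage_iInter, dense_iff_closure_eq, ← h.preimage_closure] at h3
  rw [dense_iff_closure_eq]
  have h4 := congrArg (Set.image h) h3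
  rwa [Set.image_preimage_eq _ h.surjective, Set.image_univ,
    Set.range_eq_univ.2 h.surjective] at h4

lemma not_baireSpace_rat : ¬ BaireSpace ℚ := by
  intro hB
  have hd : ∀ n : ℕ, Dense ({eQ.symm n}ᶜ : Set ℚ) := by
    intro n
    rw [Metric.dense_iff]
    intro x r hr
    by_cases hx : x = eQ.symm n
    · obtain ⟨η, hη0, hηr⟩ := exists_rat_btwn hr
      have hη0' : (0:ℚ) < η := by exact_mod_cast hη0
      refine ⟨x + η, ?_, ?_⟩
      · rw [Metric.mem_ball, Rat.dist_eq]
        push_cast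
        rw [add_sub_cancel_left, abs_of_pos hη0]
        exact hηr
      · simp only [Set.mem_compl_iff, Set.mem_singleton_iff]
        rw [← hx]
        exact ne_of_gt (lt_add_of_pos_right x hη0')
    · exact ⟨x, Metric.mem_ball_self hr, by simpa using hx⟩
  have h3 : Dense (⋂ n, ({eQ.symm n}ᶜ : Set ℚ)) :=
    dense_iInter_of_isOpen (fun n => isOpen_compl_singleton) hd
  have h4 : (⋂ n, ({eQ.symm n}ᶜ : Set ℚ)) = ∅ := by
    ext q
    simp only [Set.mem_iInter, Set.mem_compl_iff, Set.mem_singleton_iff,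
      Set.mem_empty_iff_false, iff_false, not_forall, not_not]
    exact ⟨eQ q, by simp⟩
  rw [h4] at h3
  obtain ⟨x, hx⟩ := h3.nonempty
  exact hx

/-- A nonempty open set which is covered by countably many closed sets with empty interior,
inside an arbitrary metric space, yields a closed subset homeomorphic to ℚ. -/
theorem exists_closed_copy_of_rat {Y : Type*} [MetricSpace Y] (P : Setup Y) :
    ∃ D : Set Y, IsClosed D ∧ Nonempty (↥D ≃ₜ ℚ) :=
  ⟨Set.range (xScheme P).c, xScheme_closed_range P,
    (xScheme P).homeo_of_surjective qScheme qScheme_surjective⟩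

end HurewiczAux

/-- A space is completely Baire if every closed subspace is a Baire space. -/
def CompletelyBaire (X : Type*) [TopologicalSpace X] : Prop :=
  ∀ C : Set X, IsClosed C → BaireSpace C

theorem hurewicz_completelyBaire_iff_no_closed_copy_of_rationals
    (X : Type*) [TopologicalSpace X] [TopologicalSpace.SeparableSpace X]
    [TopologicalSpace.MetrizableSpace X] :
    CompletelyBaire X ↔ ¬ ∃ C : Set X, IsClosed C ∧ Nonempty (↥C ≃ₜ ℚ) := by
  constructor
  · rintro hCB ⟨C, hC, ⟨φ⟩⟩
    haveI := hCB C hC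
    exact HurewiczAux.not_baireSpace_rat (HurewiczAux.baireSpace_of_homeomorph φ)
  · intro hno C hC
    by_contra hnB
    letI : MetricSpace C := TopologicalSpace.metrizableSpaceMetric C
    have hnB' : ¬ ∀ f : ℕ → Set C, (∀ n, IsOpen (f n)) → (∀ n, Dense (f n)) →
        Dense (⋂ n, f n) := fun h => hnB ⟨h⟩
    push_neg at hnB'
    obtain ⟨f, ho, hd, hnd⟩ := hnB'
    have hne : ((closure (⋂ n, f n))ᶜ : Set C).Nonempty := by
      rw [Dense] at hnd
      push_neg at hnd
      exact hnd
    set P : HurewiczAux.Setup C :=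
      { F := fun n => ⋃ k ∈ Finset.range (n+1), (f k)ᶜ
        U := (closure (⋂ n, f n))ᶜ
        closedF := fun n => isClosed_biUnion_finset fun k _ => (ho k).isClosed_compl
        intF := by
          intro n
          induction n with
          | zero =>
            show interior (⋃ k ∈ Finset.range (0+1), (f k)ᶜ) = ∅
            rw [Nat.zero_add, Finset.range_one, Finset.set_biUnion_singleton,
              interior_compl, (hd 0).closure_eq, Set.compl_univ]
          | succ n ih =>
            show interior (⋃ k ∈ Finset.range (n+1+1), (f k)ᶜ) = ∅
            have hsplit : (⋃ k ∈ Finset.range (n+1+1), (f k)ᶜ) =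
                (f (n+1))ᶜ ∪ (⋃ k ∈ Finset.range (n+1), (f k)ᶜ) := by
              rw [Finset.range_add_one (n := n+1), Finset.set_biUnion_insert]
            rw [hsplit,
              interior_union_isClosed_of_interior_empty (ho (n+1)).isClosed_compl ih,
              interior_compl, (hd (n+1)).closure_eq, Set.compl_univ]
        openU := isClosed_closure.isOpen_compl
        neU := hne
        covU := by
          intro z hz
          simp only [Set.mem_compl_iff] at hz
          have hz2 : z ∉ ⋂ n, f n := fun h => hz (subset_closure h)
          obtain ⟨n, hn⟩ : ∃ n, z ∉ f n := by simpa [Set.mem_iInter] using hz2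
          exact Set.mem_iUnion.2 ⟨n, Set.mem_biUnion (Finset.self_mem_range_succ n) hn⟩ }
    obtain ⟨D, hDcl, ⟨φ⟩⟩ := HurewiczAux.exists_closed_copy_of_rat P
    refine hno ⟨Subtype.val '' D, hC.isClosedEmbedding_subtypeVal.isClosedMap D hDcl, ?_⟩
    have hemb : Topology.IsEmbedding (fun d : ↥D => ((d.1 : C) : X)) :=
      hC.isClosedEmbedding_subtypeVal.isEmbedding.comp Topology.IsEmbedding.subtypeVal
    have hrange : Set.range (fun d : ↥D => ((d.1 : C) : X)) = Subtype.val '' D := by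
      ext x
      constructor
      · rintro ⟨d, rfl⟩
        exact ⟨d.1, d.2, rfl⟩
      · rintro ⟨c, hcD, rfl⟩
        exact ⟨⟨c, hcD⟩, rfl⟩
    exact ⟨(Homeomorph.setCongr hrange).symm.trans
      ((Topology.IsEmbedding.toHomeomorph hemb).symm.trans φ)⟩
end

section
/- If Q is a subset of ℝ homeomorphic to ℚ that is closed in ℝ ∖ X for some X ⊆ ℝ, then the set cl(Q) ∖ Q is contained in X and is a Polish, zero-dimensional, nowhere locally compact space; hence X contains a closed copy of ℕ^ℕ. -/
open Topology Metric Set Bornology Filter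
open scoped Classical

section AU
variable {α : Type*} [MetricSpace α]

/-- A "nice partition" of a clopen set: countably many nonempty clopen small pieces. -/
def NicePart (A : Set α) (ε : ℝ) (F : ℕ → Set α) : Prop :=
  (∀ n, IsClopen (F n) ∧ (F n).Nonempty ∧ IsBounded (F n) ∧ diam (F n) ≤ ε) ∧
  Pairwise (Function.onFun Disjoint F) ∧ (⋃ n, F n) = A

variable {B : Set (Set α)} (hB : TopologicalSpace.IsTopologicalBasis B)
  (hBc : ∀ s ∈ B, IsClopen s)

include hB hBc

theorem exists_small_clopen {x : α} {U : Set α} (hU : IsOpen U) (hx : x ∈ U) {ε : ℝ}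
    (hε : 0 < ε) : ∃ V, IsClopen V ∧ x ∈ V ∧ V ⊆ U ∧ IsBounded V ∧ diam V ≤ ε := by
  have hx' : x ∈ U ∩ ball x (ε / 2) := ⟨hx, mem_ball_self (by linarith)⟩
  obtain ⟨V, hVB, hxV, hVsub⟩ := hB.exists_subset_of_mem_open hx' (hU.inter isOpen_ball)
  have hVb : IsBounded V := (isBounded_ball (x := x) (r := ε / 2)).subset
    (hVsub.trans inter_subset_right)
  refine ⟨V, hBc V hVB, hxV, hVsub.trans inter_subset_left, hVb, ?_⟩
  calc diam V ≤ diam (ball x (ε / 2)) :=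
        diam_mono (hVsub.trans inter_subset_right) isBounded_ball
    _ ≤ 2 * (ε / 2) := diam_ball (by linarith)
    _ = ε := by ring

theorem exists_clopen_cover [SecondCountableTopology α] {A : Set α} (hA : IsClopen A)
    {ε : ℝ} (hε : 0 < ε) :
    ∃ F : ℕ → Set α, (∀ n, IsClopen (F n) ∧ IsBounded (F n) ∧ diam (F n) ≤ ε) ∧
      Pairwise (Function.onFun Disjoint F) ∧ (⋃ n, F n) = A := by
  rcases eq_empty_or_nonempty A with rfl | hAne
  · refine ⟨fun _ => ∅, fun n => ⟨isClopen_empty, isBounded_empty, by simp [diam_empty, hε.le]⟩,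
      fun m n _ => by simp [Function.onFun], by simp⟩
  · -- choose small clopen neighborhoods
    have hch : ∀ x : α, x ∈ A → ∃ V, IsClopen V ∧ x ∈ V ∧ V ⊆ A ∧ IsBounded V ∧ diam V ≤ ε :=
      fun x hx => exists_small_clopen hB hBc hA.isOpen hx hε
    choose V hVclopen hxV hVsub hVb hVdiam using hch
    set s : ↥A → Set α := fun x => V x.1 x.2 with hs
    obtain ⟨T, hTc, hTU⟩ := TopologicalSpace.isOpen_iUnion_countable s
      (fun i => (hVclopen _ _).isOpen)
    have hUA : ⋃ i, s i = A := by
      apply subset_antisymm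
      · exact iUnion_subset fun i => hVsub _ _
      · exact fun x hx => mem_iUnion.2 ⟨⟨x, hx⟩, hxV _ _⟩
    have hTne : T.Nonempty := by
      rw [nonempty_iff_ne_empty]
      rintro rfl
      have : A = ∅ := by rw [← hUA, ← hTU, biUnion_empty]
      exact hAne.ne_empty this
    obtain ⟨t, ht⟩ := hTc.exists_eq_range hTne
    set e : ℕ → Set α := fun n => s (t n) with he
    have heU : ⋃ n, e n = A := by
      rw [← hUA, ← hTU, ht, biUnion_range]
    have heclopen : ∀ n, IsClopen (e n) := fun n => hVclopen _ _
    -- disjointify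
    refine ⟨disjointed e, fun n => ⟨?_, ?_, ?_⟩, disjoint_disjointed e, by
      rw [iUnion_disjointed, heU]⟩
    · rcases n with _ | n
      · simpa [disjointed_zero] using heclopen 0
      · rw [disjointed_add_one]
        refine (heclopen _).diff ?_
        induction n with
        | zero => simpa [partialSups_zero] using heclopen 0
        | succ k ih => rw [partialSups_add_one]; exact ih.union (heclopen _)
    · exact (hVb _ _).subset (disjointed_subset e n)
    · exact le_trans (diam_mono (disjointed_subset e n) (hVb _ _)) (hVdiam _ _)

end AU

section AUextra
variable {α : Type*} [MetricSpace α]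

theorem exists_separated_seq [CompleteSpace α] {A : Set α} (hA : IsClosed A)
    (hnc : ¬ IsCompact A) :
    ∃ δ > (0:ℝ), ∃ u : ℕ → α, (∀ n, u n ∈ A) ∧
      Pairwise (fun m n => δ ≤ dist (u m) (u n)) := by
  classical
  have hnTB : ¬ TotallyBounded A := by
    intro h
    exact hnc (isCompact_iff_totallyBounded_isComplete.2 ⟨h, hA.isComplete⟩)
  rw [Metric.totallyBounded_iff] at hnTB
  push_neg at hnTB
  obtain ⟨ε, hε, hsep⟩ := hnTB
  have hpick : ∀ t : Finset α, ∃ x, x ∈ A ∧ x ∉ ⋃ y ∈ (t : Set α), ball y ε := by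
    intro t
    have := hsep t t.finite_toSet
    rw [not_subset] at this
    obtain ⟨x, hxA, hx⟩ := this
    exact ⟨x, hxA, hx⟩
  choose pick hpickA hpickain using hpick
  let v : ℕ → Finset α := fun n => Nat.rec ∅ (fun _ t => insert (pick t) t) n
  have hv0 : v 0 = ∅ := rfl
  have hvs : ∀ n, v (n + 1) = insert (pick (v n)) (v n) := fun n => rfl
  have hvmono : ∀ m n, m ≤ n → v m ⊆ v n := by
    intro m n hmn
    induction n with
    | zero => simp [Nat.le_zero.1 hmn]
    | succ k ih =>
      rcases Nat.lt_or_ge m (k+1) with h | h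
      · exact (ih (Nat.lt_succ_iff.1 h)).trans (by rw [hvs]; exact Finset.subset_insert _ _)
      · have : m = k + 1 := le_antisymm hmn h
        simp [this]
  set u : ℕ → α := fun n => pick (v n) with hu
  have humem : ∀ m n, m < n → u m ∈ v n := by
    intro m n hmn
    have : u m ∈ v (m + 1) := by rw [hvs]; exact Finset.mem_insert_self _ _
    exact hvmono _ _ hmn this
  have key : ∀ m n, m < n → ε ≤ dist (u m) (u n) := by
    intro m n hmn
    by_contra h
    push_neg at h
    apply hpickain (v n)
    exact mem_biUnion (humem m n hmn) (by rwa [mem_ball, dist_comm])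
  refine ⟨ε, hε, u, fun n => hpickA _, fun m n hmn => ?_⟩
  rcases lt_or_gt_of_ne hmn with h | h
  · exact key m n h
  · rw [dist_comm]; exact key n m h


theorem exists_nicePart [CompleteSpace α] [SecondCountableTopology α]
    {B : Set (Set α)} (hB : TopologicalSpace.IsTopologicalBasis B)
    (hBc : ∀ s ∈ B, IsClopen s)
    (hnc : ∀ A : Set α, IsClopen A → A.Nonempty → ¬ IsCompact A)
    {A : Set α} (hA : IsClopen A) (hAne : A.Nonempty) {ε : ℝ} (hε : 0 < ε) :
    ∃ F : ℕ → Set α, NicePart A ε F := by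
  obtain ⟨δ, hδ, u, huA, husep⟩ := exists_separated_seq hA.isClosed (hnc A hA hAne)
  have hδ3 : (0:ℝ) < δ / 3 := by linarith
  have hex : ∀ n : ℕ, ∃ V, IsClopen V ∧ u n ∈ V ∧ V ⊆ A ∩ ball (u n) (δ/3) ∧
      IsBounded V ∧ diam V ≤ ε :=
    fun n => exists_small_clopen hB hBc (hA.isOpen.inter isOpen_ball)
      ⟨huA n, mem_ball_self hδ3⟩ hε
  choose C hCclopen hCmem hCsub hCb hCdiam using hex
  have hCball : ∀ n, C n ⊆ ball (u n) (δ/3) := fun n => (hCsub n).trans inter_subset_right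
  have hCA : ∀ n, C n ⊆ A := fun n => (hCsub n).trans inter_subset_left
  have hCdisj : ∀ m n, m ≠ n → Disjoint (C m) (C n) := by
    intro m n hmn
    rw [Set.disjoint_left]
    intro z hzm hzn
    have h1 := mem_ball.1 (hCball m hzm)
    have h2 := mem_ball.1 (hCball n hzn)
    have h3 : dist (u m) (u n) ≤ dist z (u m) + dist z (u n) :=
      dist_triangle_left _ _ _
    have h4 := husep hmn
    linarith
  set W := ⋃ n, C (n+1) with hW
  have hWopen : IsOpen W := isOpen_iUnion fun n => (hCclopen _).isOpen
  have hWclosed : IsClosed W := by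
    rw [← closure_subset_iff_isClosed]
    intro z hz
    rw [Metric.mem_closure_iff] at hz
    obtain ⟨p, hpW, hpz⟩ := hz (δ/7) (by linarith)
    obtain ⟨i, hpi⟩ := mem_iUnion.1 hpW
    have hzC : z ∈ closure (C (i+1)) := by
      rw [Metric.mem_closure_iff]
      intro r hr
      obtain ⟨q, hqW, hqz⟩ := hz (min r (δ/7)) (by positivity)
      obtain ⟨j, hqj⟩ := mem_iUnion.1 hqW
      have hji : j = i := by
        by_contra hne
        have h1 := mem_ball.1 (hCball _ hpi)
        have h2 := mem_ball.1 (hCball _ hqj)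
        have h3 : dist (u (i+1)) (u (j+1)) ≤
            dist (u (i+1)) p + dist p z + dist z q + dist q (u (j+1)) := by
          calc dist (u (i+1)) (u (j+1)) ≤ dist (u (i+1)) q + dist q (u (j+1)) :=
                dist_triangle _ _ _
            _ ≤ (dist (u (i+1)) p + dist p q) + dist q (u (j+1)) := by
                have := dist_triangle (u (i+1)) p q; linarith
            _ ≤ (dist (u (i+1)) p + (dist p z + dist z q)) + dist q (u (j+1)) := by
                have := dist_triangle p z q; linarith
            _ = _ := by ring
        have h4 := husep (show i + 1 ≠ j + 1 by omega)
        have h5 : dist p z < δ/7 := by rw [dist_comm]; exact hpz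
        have h6 : dist z q < δ/7 := lt_of_lt_of_le hqz (min_le_right _ _)
        have h7 : dist (u (i+1)) p < δ/3 := by rw [dist_comm]; exact h1
        have h8 : dist q (u (j+1)) < δ/3 := h2
        linarith
      subst hji
      exact ⟨q, hqj, hqz.trans_le (min_le_left _ _)⟩
    exact mem_iUnion.2 ⟨i, (hCclopen (i+1)).isClosed.closure_subset hzC⟩
  have hWclopen : IsClopen W := ⟨hWclosed, hWopen⟩
  set R := A \ W with hR
  have hRclopen : IsClopen R := hA.diff hWclopen
  obtain ⟨G, hGprop, hGdisj, hGU⟩ := exists_clopen_cover hB hBc hRclopen hε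
  classical
  set E : ℕ → Set α := fun n => if Even n then C (n/2 + 1) else G (n/2) with hE
  have hEeven : ∀ k, E (2*k) = C (k+1) := by
    intro k
    have h2 : 2*k/2 = k := by omega
    simp only [hE]
    rw [if_pos (even_two_mul k), h2]
  have hEodd : ∀ k, E (2*k+1) = G k := by
    intro k
    have hodd : ¬ Even (2*k+1) := by rw [Nat.even_iff]; omega
    have h2 : (2*k+1)/2 = k := by omega
    simp only [hE]
    rw [if_neg hodd, h2]
  have hEsubA : ∀ n, E n ⊆ A := by
    intro n
    rcases Nat.even_or_odd n with ⟨k, hk⟩ | ⟨k, hk⟩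
    · rw [show n = 2*k by omega, hEeven]; exact hCA _
    · rw [show n = 2*k+1 by omega, hEodd]
      exact (subset_iUnion G k).trans (hGU.le.trans diff_subset)
  have hEgood : ∀ n, IsClopen (E n) ∧ IsBounded (E n) ∧ diam (E n) ≤ ε := by
    intro n
    rcases Nat.even_or_odd n with ⟨k, hk⟩ | ⟨k, hk⟩
    · rw [show n = 2*k by omega, hEeven]; exact ⟨hCclopen _, hCb _, hCdiam _⟩
    · rw [show n = 2*k+1 by omega, hEodd]; exact hGprop k
  have hEdisj : ∀ m n, m ≠ n → Disjoint (E m) (E n) := by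
    have hCW : ∀ k, C (k+1) ⊆ W := fun k => subset_iUnion (fun n => C (n+1)) k
    have hGR : ∀ k, G k ⊆ R := fun k => (subset_iUnion G k).trans hGU.le
    intro m n hmn
    rcases Nat.even_or_odd m with ⟨a, ha⟩ | ⟨a, ha⟩ <;>
      rcases Nat.even_or_odd n with ⟨b, hb⟩ | ⟨b, hb⟩
    · rw [show m = 2*a by omega, show n = 2*b by omega, hEeven, hEeven]
      exact hCdisj _ _ (by omega)
    · rw [show m = 2*a by omega, show n = 2*b+1 by omega, hEeven, hEodd]
      exact (Set.disjoint_sdiff_right (s := W) (t := A)).mono (hCW a) (hGR b)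
    · rw [show m = 2*a+1 by omega, show n = 2*b by omega, hEodd, hEeven]
      exact ((Set.disjoint_sdiff_right (s := W) (t := A)).mono (hCW b) (hGR a)).symm
    · rw [show m = 2*a+1 by omega, show n = 2*b+1 by omega, hEodd, hEodd]
      exact hGdisj (by omega)
  have hEU : ⋃ n, E n = A := by
    apply subset_antisymm (iUnion_subset hEsubA)
    intro x hx
    by_cases hxW : x ∈ W
    · obtain ⟨i, hi⟩ := mem_iUnion.1 hxW
      exact mem_iUnion.2 ⟨2*i, by rw [hEeven]; exact hi⟩
    · have : x ∈ R := ⟨hx, hxW⟩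
      rw [← hGU] at this
      obtain ⟨j, hj⟩ := mem_iUnion.1 this
      exact mem_iUnion.2 ⟨2*j+1, by rw [hEodd]; exact hj⟩
  set p : ℕ → Prop := fun n => (E n).Nonempty with hp
  have hinf : {n | p n}.Infinite := by
    apply Set.infinite_of_injective_forall_mem (f := fun k : ℕ => 2*k)
    · intro a b h
      have : 2*a = 2*b := h
      omega
    · intro k
      simp only [mem_setOf_eq, hp]
      rw [hEeven]
      exact ⟨u (k+1), hCmem _⟩
  refine ⟨fun k => E (Nat.nth p k), fun k => ?_, fun k k' hkk' => ?_, ?_⟩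
  · obtain ⟨h1, h2, h3⟩ := hEgood (Nat.nth p k)
    exact ⟨h1, Nat.nth_mem_of_infinite hinf k, h2, h3⟩
  · exact hEdisj _ _ fun h => hkk' (Nat.nth_injective hinf h)
  · apply subset_antisymm (iUnion_subset fun k => hEsubA _)
    intro x hx
    rw [← hEU] at hx
    obtain ⟨n, hn⟩ := mem_iUnion.1 hx
    have hpn : p n := ⟨x, hn⟩
    have : n ∈ range (Nat.nth p) := by rw [Nat.range_nth_of_infinite hinf]; exact hpn
    obtain ⟨k, hk⟩ := this
    exact mem_iUnion.2 ⟨k, by rw [hk]; exact hn⟩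


/-- abbreviation for the partition hypothesis -/
def PartHyp (α : Type*) [MetricSpace α] : Prop :=
  ∀ (A : Set α), IsClopen A → A.Nonempty → ∀ ε : ℝ, 0 < ε → ∃ F : ℕ → Set α, NicePart A ε F

noncomputable def AUsplit (H : PartHyp α) (A : Set α) (ε : ℝ) : ℕ → Set α :=
  if h : IsClopen A ∧ A.Nonempty ∧ 0 < ε then (H A h.1 h.2.1 ε h.2.2).choose
  else fun _ => ∅

theorem AUsplit_spec (H : PartHyp α) {A : Set α} {ε : ℝ} (h1 : IsClopen A)
    (h2 : A.Nonempty) (h3 : 0 < ε) : NicePart A ε (AUsplit H A ε) := by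
  rw [AUsplit, dif_pos ⟨h1, h2, h3⟩]
  exact (H A h1 h2 ε h3).choose_spec

noncomputable def AUscheme (H : PartHyp α) : List ℕ → Set α
  | [] => Set.univ
  | a :: l => AUsplit H (AUscheme H l) ((1/2 : ℝ) ^ l.length) a

variable [Nonempty α] (H : PartHyp α)

theorem AUscheme_good : ∀ l : List ℕ, IsClopen (AUscheme H l) ∧ (AUscheme H l).Nonempty := by
  intro l
  induction l with
  | nil => exact ⟨isClopen_univ, univ_nonempty⟩
  | cons a l ih =>
    have h := AUsplit_spec H ih.1 ih.2 (pow_pos (by norm_num : (0:ℝ) < 1/2) l.length)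
    exact ⟨(h.1 a).1, (h.1 a).2.1⟩

theorem AUscheme_part (l : List ℕ) :
    NicePart (AUscheme H l) ((1/2 : ℝ) ^ l.length) (fun a => AUscheme H (a :: l)) :=
  AUsplit_spec H (AUscheme_good H l).1 (AUscheme_good H l).2 (pow_pos (by norm_num : (0:ℝ) < 1/2) l.length)

theorem AUscheme_sub (a : ℕ) (l : List ℕ) : AUscheme H (a :: l) ⊆ AUscheme H l := by
  conv_rhs => rw [← (AUscheme_part H l).2.2]
  exact subset_iUnion (fun b => AUscheme H (b :: l)) a

theorem AUscheme_bounded (a : ℕ) (l : List ℕ) : IsBounded (AUscheme H (a :: l)) :=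
  ((AUscheme_part H l).1 a).2.2.1

theorem AUscheme_diam (a : ℕ) (l : List ℕ) :
    diam (AUscheme H (a :: l)) ≤ (1/2 : ℝ) ^ l.length :=
  ((AUscheme_part H l).1 a).2.2.2

theorem AUscheme_disj {a b : ℕ} (hab : a ≠ b) (l : List ℕ) :
    Disjoint (AUscheme H (a :: l)) (AUscheme H (b :: l)) :=
  (AUscheme_part H l).2.1 hab

theorem AUscheme_exists_cons {y : α} {l : List ℕ} (hy : y ∈ AUscheme H l) :
    ∃ a, y ∈ AUscheme H (a :: l) := by
  rw [← (AUscheme_part H l).2.2] at hy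
  exact mem_iUnion.1 hy

/-- reversed prefix of length `n` -/
def AUpre (x : ℕ → ℕ) : ℕ → List ℕ
  | 0 => []
  | n + 1 => x n :: AUpre x n

theorem AUpre_length (x : ℕ → ℕ) (n : ℕ) : (AUpre x n).length = n := by
  induction n with
  | zero => rfl
  | succ k ih => simp [AUpre, ih]

theorem AUpre_eq_of_agree {x y : ℕ → ℕ} : ∀ {n : ℕ}, (∀ i < n, x i = y i) →
    AUpre x n = AUpre y n := by
  intro n
  induction n with
  | zero => intro _; rfl
  | succ k ih =>
    intro h
    simp only [AUpre]
    rw [h k (Nat.lt_succ_self k), ih fun i hi => h i (hi.trans (Nat.lt_succ_self k))]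

theorem AUscheme_pre_anti (x : ℕ → ℕ) : ∀ {m n : ℕ}, m ≤ n →
    AUscheme H (AUpre x n) ⊆ AUscheme H (AUpre x m) := by
  intro m n hmn
  induction n with
  | zero => rw [Nat.le_zero.1 hmn]
  | succ k ih =>
    rcases Nat.lt_or_ge m (k+1) with h | h
    · exact (AUscheme_sub H (x k) (AUpre x k)).trans (ih (Nat.lt_succ_iff.1 h))
    · rw [le_antisymm hmn h]

theorem AUdist_le {x : ℕ → ℕ} {n : ℕ} {y z : α} (hy : y ∈ AUscheme H (AUpre x (n+1)))
    (hz : z ∈ AUscheme H (AUpre x (n+1))) : dist y z ≤ (1/2 : ℝ) ^ n := by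
  have h1 : dist y z ≤ diam (AUscheme H (AUpre x (n+1))) :=
    dist_le_diam_of_mem (AUscheme_bounded H _ _) hy hz
  have h2 := AUscheme_diam H (x n) (AUpre x n)
  rw [AUpre_length] at h2
  exact h1.trans h2

variable [CompleteSpace α]

theorem AUiInter_nonempty (x : ℕ → ℕ) :
    (⋂ n, AUscheme H (AUpre x n)).Nonempty := by
  set s : ℕ → Set α := fun n => AUscheme H (AUpre x (n+1)) with hs
  have hmono : ∀ m n : ℕ, m ≤ n → s n ⊆ s m := fun m n hmn =>
    AUscheme_pre_anti H x (Nat.succ_le_succ hmn)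
  have hne : (⋂ n, s n).Nonempty := by
    apply nonempty_iInter_of_nonempty_biInter
    · exact fun n => (AUscheme_good H _).1.isClosed
    · exact fun n => AUscheme_bounded H _ _
    · intro N
      obtain ⟨y, hy⟩ := (AUscheme_good H (AUpre x (N+1))).2
      exact ⟨y, mem_iInter₂.2 fun n hn => hmono n N hn hy⟩
    · have hb : Tendsto (fun n : ℕ => (1/2:ℝ)^n) atTop (𝓝 0) :=
        tendsto_pow_atTop_nhds_zero_of_lt_one (by norm_num) (by norm_num)
      refine squeeze_zero (fun n => diam_nonneg) (fun n => ?_) hb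
      have h2 := AUscheme_diam H (x n) (AUpre x n)
      rwa [AUpre_length] at h2
  obtain ⟨y, hy⟩ := hne
  refine ⟨y, mem_iInter.2 fun n => ?_⟩
  rcases n with _ | k
  · exact mem_univ y
  · exact mem_iInter.1 hy k

noncomputable def AUf (x : ℕ → ℕ) : α := (AUiInter_nonempty H x).choose

theorem AUf_mem (x : ℕ → ℕ) (n : ℕ) : AUf H x ∈ AUscheme H (AUpre x n) :=
  mem_iInter.1 (AUiInter_nonempty H x).choose_spec n

theorem AUf_injective : Function.Injective (AUf H) := by
  intro x y hxy
  have key : ∀ n, x n = y n := by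
    intro n
    induction n using Nat.strong_induction_on with
    | _ n ih =>
      have hpre : AUpre x n = AUpre y n := AUpre_eq_of_agree fun i hi => ih i hi
      by_contra hne
      have h1 : AUf H x ∈ AUscheme H (x n :: AUpre x n) := AUf_mem H x (n+1)
      have h2 : AUf H y ∈ AUscheme H (y n :: AUpre x n) := by
        have := AUf_mem H y (n+1)
        rwa [show AUpre y (n+1) = y n :: AUpre y n from rfl, ← hpre] at this
      exact (AUscheme_disj H hne (AUpre x n)).ne_of_mem h1 h2 hxy
  funext n
  exact key n

/-- pick an index of a piece containing `y` -/
noncomputable def AUstep (y : α) (l : List ℕ) : ℕ :=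
  if h : ∃ a, y ∈ AUscheme H (a :: l) then h.choose else 0

theorem AUstep_spec {y : α} {l : List ℕ} (hy : y ∈ AUscheme H l) :
    y ∈ AUscheme H (AUstep H y l :: l) := by
  have h : ∃ a, y ∈ AUscheme H (a :: l) := AUscheme_exists_cons H hy
  rw [AUstep, dif_pos h]
  exact h.choose_spec

noncomputable def AUchain (y : α) (l0 : List ℕ) : ℕ → List ℕ
  | 0 => l0
  | k + 1 => AUstep H y (AUchain y l0 k) :: AUchain y l0 k

theorem AUchain_mem {y : α} {l0 : List ℕ} (hy : y ∈ AUscheme H l0) :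
    ∀ k, y ∈ AUscheme H (AUchain H y l0 k) := by
  intro k
  induction k with
  | zero => exact hy
  | succ j ih => exact AUstep_spec H ih

theorem AUchain_length (y : α) (l0 : List ℕ) (k : ℕ) :
    (AUchain H y l0 k).length = l0.length + k := by
  induction k with
  | zero => rfl
  | succ j ih => simp [AUchain, ih]; omega

theorem AUf_surj_ext (x0 : ℕ → ℕ) (n0 : ℕ) {y : α} (hy : y ∈ AUscheme H (AUpre x0 n0)) :
    ∃ x : ℕ → ℕ, (∀ i < n0, x i = x0 i) ∧ AUf H x = y := by
  classical
  set l0 := AUpre x0 n0 with hl0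
  set x : ℕ → ℕ := fun i => if i < n0 then x0 i else AUstep H y (AUchain H y l0 (i - n0))
    with hx
  have hagree : ∀ i < n0, x i = x0 i := fun i hi => by simp [hx, if_pos hi]
  have hchain : ∀ k, AUpre x (n0 + k) = AUchain H y l0 k := by
    intro k
    induction k with
    | zero => simpa [AUchain] using AUpre_eq_of_agree hagree
    | succ j ih =>
      have h1 : AUpre x (n0 + (j+1)) = x (n0 + j) :: AUpre x (n0 + j) := rfl
      have h2 : x (n0 + j) = AUstep H y (AUchain H y l0 j) := by
        have hEq : n0 + j - n0 = j := by omega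
        simp only [hx]
        rw [if_neg (by omega : ¬ n0 + j < n0), hEq]
      rw [h1, h2, ih]
      rfl
  have hymem : ∀ k, y ∈ AUscheme H (AUpre x (n0 + k)) := by
    intro k
    rw [hchain k]
    exact AUchain_mem H hy k
  refine ⟨x, hagree, ?_⟩
  have hdist : ∀ k : ℕ, dist (AUf H x) y ≤ (1/2 : ℝ) ^ (n0 + k) := by
    intro k
    exact AUdist_le H (AUf_mem H x (n0 + k + 1)) (hymem (k + 1))
  have h0 : dist (AUf H x) y ≤ 0 := by
    apply ge_of_tendsto (f := fun k : ℕ => (1/2 : ℝ) ^ (n0 + k)) (x := atTop)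
    · have : Tendsto (fun k : ℕ => (1/2 : ℝ) ^ k) atTop (𝓝 0) :=
        tendsto_pow_atTop_nhds_zero_of_lt_one (by norm_num) (by norm_num)
      have h2 : (fun k : ℕ => (1/2 : ℝ) ^ (n0 + k)) = fun k => (1/2:ℝ)^n0 * (1/2:ℝ)^k := by
        funext k
        rw [pow_add]
      rw [h2]
      simpa using this.const_mul ((1/2:ℝ)^n0)
    · exact Eventually.of_forall hdist
  have := dist_nonneg (x := AUf H x) (y := y)
  exact dist_eq_zero.1 (le_antisymm h0 this)

theorem AUf_surjective : Function.Surjective (AUf H) := by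
  intro y
  obtain ⟨x, -, hx⟩ := AUf_surj_ext H (fun _ => 0) 0 (mem_univ y)
  exact ⟨x, hx⟩

theorem AUf_image_cylinder (x0 : ℕ → ℕ) (n0 : ℕ) :
    AUf H '' PiNat.cylinder x0 n0 = AUscheme H (AUpre x0 n0) := by
  apply subset_antisymm
  · rintro - ⟨x, hx, rfl⟩
    have : AUpre x n0 = AUpre x0 n0 :=
      AUpre_eq_of_agree fun i hi => PiNat.mem_cylinder_iff.1 hx i hi
    rw [← this]
    exact AUf_mem H x n0
  · intro y hy
    obtain ⟨x, hagree, hx⟩ := AUf_surj_ext H x0 n0 hy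
    exact ⟨x, PiNat.mem_cylinder_iff.2 hagree, hx⟩

theorem AUf_continuous : Continuous (AUf H) := by
  rw [continuous_iff_continuousAt]
  intro x
  rw [ContinuousAt, Metric.tendsto_nhds]
  intro ε hε
  obtain ⟨n, hn⟩ := exists_pow_lt_of_lt_one hε (by norm_num : (1/2:ℝ) < 1)
  have hcyl : PiNat.cylinder x (n+1) ∈ 𝓝 x :=
    (PiNat.isOpen_cylinder _ _ _).mem_nhds (PiNat.self_mem_cylinder _ _)
  filter_upwards [hcyl] with x' hx'
  have h1 : AUpre x' (n+1) = AUpre x (n+1) :=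
    AUpre_eq_of_agree fun i hi => PiNat.mem_cylinder_iff.1 hx' i hi
  have h2 : AUf H x' ∈ AUscheme H (AUpre x (n+1)) := by
    rw [← h1]; exact AUf_mem H x' (n+1)
  calc dist (AUf H x') (AUf H x) ≤ (1/2:ℝ)^n := AUdist_le H h2 (AUf_mem H x (n+1))
    _ < ε := hn

theorem AUf_isOpenMap : IsOpenMap (AUf H) := by
  intro U hU
  obtain ⟨S, hSB, rfl⟩ := (PiNat.isTopologicalBasis_cylinders
    (fun _ : ℕ => ℕ)).open_eq_sUnion hU
  rw [Set.image_sUnion]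
  apply isOpen_sUnion
  rintro - ⟨t, htS, rfl⟩
  obtain ⟨x0, n0, rfl⟩ := hSB htS
  rw [AUf_image_cylinder]
  exact (AUscheme_good H _).1.isOpen

theorem AU_main_metric [SecondCountableTopology α]
    {B : Set (Set α)} (hB : TopologicalSpace.IsTopologicalBasis B)
    (hBc : ∀ s ∈ B, IsClopen s)
    (hnc : ∀ A : Set α, IsClopen A → A.Nonempty → ¬ IsCompact A) :
    Nonempty (α ≃ₜ (ℕ → ℕ)) := by
  have H : PartHyp α := fun A h1 h2 ε h3 => exists_nicePart hB hBc hnc h1 h2 h3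
  exact ⟨(Equiv.toHomeomorphOfContinuousOpen
    (Equiv.ofBijective (AUf H) ⟨AUf_injective H, AUf_surjective H⟩)
    (AUf_continuous H) (AUf_isOpenMap H)).symm⟩


end AUextra

theorem AU_main {α : Type*} [TopologicalSpace α] [PolishSpace α] [Nonempty α]
    (hB : ∃ B : Set (Set α), TopologicalSpace.IsTopologicalBasis B ∧ ∀ s ∈ B, IsClopen s)
    (hnlc : ∀ x : α, ¬ ∃ s ∈ nhds x, IsCompact s) :
    Nonempty (α ≃ₜ (ℕ → ℕ)) := by
  obtain ⟨B, hBbasis, hBc⟩ := hB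
  letI := TopologicalSpace.upgradeIsCompletelyMetrizable α
  have hnc : ∀ A : Set α, IsClopen A → A.Nonempty → ¬ IsCompact A := by
    intro A hA hne hcomp
    obtain ⟨x, hx⟩ := hne
    exact hnlc x ⟨A, hA.isOpen.mem_nhds hx, hcomp⟩
  exact AU_main_metric hBbasis hBc hnc

theorem closure_diff_of_closed_copy_of_rationals (X Q : Set ℝ)
    (hQhomeo : Nonempty (↥Q ≃ₜ ℚ)) (hQsub : Q ⊆ Xᶜ)
    (hQclosed : IsClosed ((↑) ⁻¹' Q : Set ↥(Xᶜ))) :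
    closure Q \ Q ⊆ X ∧
    PolishSpace ↥(closure Q \ Q) ∧
    (∃ B : Set (Set ↥(closure Q \ Q)), TopologicalSpace.IsTopologicalBasis B ∧
      ∀ s ∈ B, IsClopen s) ∧
    (∀ x : ↥(closure Q \ Q), ¬ ∃ s ∈ nhds x, IsCompact s) ∧
    ∃ C : Set ↥X, IsClosed C ∧ Nonempty (↥C ≃ₜ (ℕ → ℕ)) := by
  obtain ⟨φ⟩ := hQhomeo
  set S : Set ℝ := closure Q \ Q with hSdef
  -- basic facts about Q
  have hQc : Q.Countable := by
    rw [← Set.countable_coe_iff]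
    exact φ.toEquiv.countable_iff.mpr inferInstance
  have hQne : Q.Nonempty := by
    rw [← Set.nonempty_coe_sort]
    exact ⟨φ.symm 0⟩
  have hQS : ∀ {z : ℝ}, z ∈ Q → z ∉ S := fun hz hzS => hzS.2 hz
  -- Part A : S ⊆ X
  have hsub : S ⊆ X := by
    intro z hz
    by_contra hzX
    have hz' : (⟨z, hzX⟩ : ↥(Xᶜ)) ∈ closure ((↑) ⁻¹' Q : Set ↥(Xᶜ)) := by
      rw [closure_subtype]
      have : Subtype.val '' ((↑) ⁻¹' Q : Set ↥(Xᶜ)) = Q := by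
        apply subset_antisymm
        · rintro - ⟨y, hy, rfl⟩; exact hy
        · intro y hy; exact ⟨⟨y, hQsub hy⟩, hy, rfl⟩
      rw [this]
      exact hz.1
    rw [hQclosed.closure_eq] at hz'
    exact hz.2 hz'
  -- Q has no isolated points
  have hniso : ∀ q ∈ Q, ∀ W : Set ℝ, IsOpen W → q ∈ W → ∃ q', q' ∈ Q ∩ W ∧ q' ≠ q := by
    intro q hq W hW hqW
    by_contra hno
    push_neg at hno
    have hsingle : ((↑) ⁻¹' W : Set ↥Q) = {⟨q, hq⟩} := by
      apply subset_antisymm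
      · intro y hy
        have hyq : y.val = q := hno y.val ⟨y.2, hy⟩
        simp only [mem_singleton_iff]
        exact Subtype.ext hyq
      · intro y hy
        rw [mem_singleton_iff] at hy
        subst hy
        exact hqW
    have hopen : IsOpen ({⟨q, hq⟩} : Set ↥Q) := by
      rw [← hsingle]
      exact hW.preimage continuous_subtype_val
    have hopen2 : IsOpen ({φ ⟨q, hq⟩} : Set ℚ) := by
      have := φ.isOpenMap _ hopen
      rwa [Set.image_singleton] at this
    have hne : (𝓝[≠] (φ ⟨q, hq⟩)).NeBot := inferInstance
    have hle1 : 𝓝[≠] (φ ⟨q, hq⟩) ≤ Filter.principal {φ ⟨q, hq⟩} :=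
      nhdsWithin_le_nhds.trans (le_principal_iff.2 (hopen2.mem_nhds rfl))
    have hle2 : 𝓝[≠] (φ ⟨q, hq⟩) ≤ Filter.principal {φ ⟨q, hq⟩}ᶜ :=
      le_principal_iff.2 self_mem_nhdsWithin
    have hbot : 𝓝[≠] (φ ⟨q, hq⟩) ≤ ⊥ := by
      have h := le_inf hle1 hle2
      rw [Filter.inf_principal, inter_compl_self, Filter.principal_empty] at h
      exact h
    exact hne.ne (le_bot_iff.1 hbot)
  -- S accumulates at every point of Q
  have hacc : ∀ q ∈ Q, ∀ ε : ℝ, 0 < ε → (S ∩ ball q ε).Nonempty := by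
    intro q hq ε hε
    by_contra hempty
    rw [not_nonempty_iff_eq_empty] at hempty
    set T : Set ℝ := closure Q ∩ ball q ε with hT
    have hTQ : T ⊆ Q := by
      intro t ⟨ht1, ht2⟩
      by_contra htQ
      have : t ∈ S ∩ ball q ε := ⟨⟨ht1, htQ⟩, ht2⟩
      rw [hempty] at this
      exact this
    -- T is Polish via a closed embedding into the open ball
    haveI hball : PolishSpace ↥(ball q ε) := isOpen_ball.polishSpace
    have hfemb : Topology.IsClosedEmbedding
        (fun t : ↥T => (⟨t.val, t.2.2⟩ : ↥(ball q ε))) := by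
      constructor
      · have hcont : Continuous (fun t : ↥T => (⟨t.val, t.2.2⟩ : ↥(ball q ε))) :=
          continuous_subtype_val.subtype_mk _
        exact IsEmbedding.of_comp hcont continuous_subtype_val IsEmbedding.subtypeVal
      · have : range (fun t : ↥T => (⟨t.val, t.2.2⟩ : ↥(ball q ε)))
            = ((↑) ⁻¹' closure Q : Set ↥(ball q ε)) := by
          ext y
          constructor
          · rintro ⟨t, rfl⟩; exact t.2.1
          · intro hy; exact ⟨⟨y.val, hy, y.2⟩, rfl⟩
        rw [this]
        exact isClosed_closure.preimage continuous_subtype_val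
    haveI hTpolish : PolishSpace ↥T := hfemb.polishSpace
    haveI : Nonempty ↥T := ⟨⟨q, subset_closure hq, mem_ball_self hε⟩⟩
    haveI : Countable ↥T := by
      rw [Set.countable_coe_iff]
      exact hQc.mono hTQ
    have hbaire : BaireSpace ↥T := by
      letI m := TopologicalSpace.upgradeIsCompletelyMetrizable ↥T
      exact BaireSpace.of_completelyPseudoMetrizable
    obtain ⟨t, ht⟩ := @nonempty_interior_of_iUnion_of_closed ↥T ↥T _ hbaire _ _
      (fun t => ({t} : Set ↥T)) (fun t => isClosed_singleton) (by ext y; simp)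
    obtain ⟨y, hy⟩ := ht
    have hyt : y = t := mem_singleton_iff.1 (interior_subset hy)
    subst hyt
    have hopen : IsOpen ({y} : Set ↥T) := by
      rw [← interior_eq_iff_isOpen]
      apply subset_antisymm interior_subset
      intro z hz
      rw [mem_singleton_iff] at hz
      subst hz
      exact hy
    obtain ⟨W, hWopen, hWpre⟩ := isOpen_induced_iff.1 hopen
    have htT := hTQ y.2
    obtain ⟨q', hq', hq'ne⟩ := hniso y.val htT (W ∩ ball q ε)
      (hWopen.inter isOpen_ball) ⟨by
        have hmem : y ∈ ((↑) ⁻¹' W : Set ↥T) := by rw [hWpre]; rfl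
        exact hmem, y.2.2⟩
    have hq'T : q' ∈ T := ⟨subset_closure hq'.1, hq'.2.2⟩
    have hmem2 : (⟨q', hq'T⟩ : ↥T) ∈ ((↑) ⁻¹' W : Set ↥T) := hq'.2.1
    rw [hWpre, mem_singleton_iff] at hmem2
    exact hq'ne (congrArg Subtype.val hmem2)
  -- S is nonempty
  obtain ⟨q₀, hq₀⟩ := id hQne
  have hSne : S.Nonempty := by
    obtain ⟨z, hz, -⟩ := hacc q₀ hq₀ 1 one_pos
    exact ⟨z, hz⟩
  haveI : Nonempty ↥S := hSne.to_subtype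
  -- Polish
  obtain ⟨qe, hqe⟩ := hQc.exists_eq_range hQne
  have hPolish : PolishSpace ↥S := by
    set f : ↥S → ℝ × (ℕ → ℝ) := fun x => (x.val, fun n => (x.val - qe n)⁻¹) with hf
    have hne : ∀ (x : ↥S) (n : ℕ), x.val - qe n ≠ 0 := by
      intro x n
      rw [sub_ne_zero]
      intro h
      exact x.2.2 (by rw [hqe, h]; exact mem_range_self n)
    have hcont : Continuous f := by
      refine Continuous.prodMk continuous_subtype_val ?_
      refine continuous_pi fun n => ?_
      exact (continuous_subtype_val.sub continuous_const).inv₀ fun x => hne x n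
    have hemb : IsEmbedding f :=
      IsEmbedding.of_comp hcont continuous_fst IsEmbedding.subtypeVal
    have hrange : range f = {p : ℝ × (ℕ → ℝ) | p.1 ∈ closure Q} ∩
        ⋂ n, {p : ℝ × (ℕ → ℝ) | p.2 n * (p.1 - qe n) = 1} := by
      ext p
      constructor
      · rintro ⟨x, rfl⟩
        exact ⟨x.2.1, mem_iInter.2 fun n => inv_mul_cancel₀ (hne x n)⟩
      · rintro ⟨hy, hw⟩
        rw [mem_iInter] at hw
        have hyQ : p.1 ∉ Q := by
          intro hyQ
          rw [hqe] at hyQ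
          obtain ⟨n, hn⟩ := hyQ
          have h1 := hw n
          simp only [mem_setOf_eq] at h1
          rw [← hn, sub_self, mul_zero] at h1
          exact one_ne_zero h1.symm
        refine ⟨⟨p.1, hy, hyQ⟩, ?_⟩
        exact Prod.ext rfl (funext fun n => (eq_inv_of_mul_eq_one_left (hw n)).symm)
    have hclosed : IsClosed (range f) := by
      rw [hrange]
      apply IsClosed.inter
      · exact isClosed_closure.preimage continuous_fst
      · apply isClosed_iInter
        intro n
        apply isClosed_eq _ continuous_const
        exact ((continuous_apply n).comp continuous_snd).mul
          ((continuous_fst).sub continuous_const)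
    exact Topology.IsClosedEmbedding.polishSpace ⟨hemb, hclosed⟩
  -- dense complement
  have hdense : Dense Sᶜ := by
    intro z
    by_cases hz : z ∈ S
    · exact closure_mono (fun y hy => (hQS hy : y ∉ S)) hz.1
    · exact subset_closure hz
  -- clopen basis
  have hbasis : ∃ B : Set (Set ↥S), TopologicalSpace.IsTopologicalBasis B ∧
      ∀ s ∈ B, IsClopen s := by
    set B : Set (Set ↥S) :=
      {V | ∃ a b : ℝ, a ∉ S ∧ b ∉ S ∧ V = ((↑) ⁻¹' Ioo a b : Set ↥S)} with hB
    have hclopen : ∀ V ∈ B, IsClopen V := by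
      rintro - ⟨a, b, ha, hb, rfl⟩
      constructor
      · have : ((↑) ⁻¹' Ioo a b : Set ↥S) = ((↑) ⁻¹' Icc a b : Set ↥S) := by
          ext x
          simp only [mem_preimage, mem_Ioo, mem_Icc]
          constructor
          · rintro ⟨h1, h2⟩; exact ⟨h1.le, h2.le⟩
          · rintro ⟨h1, h2⟩
            refine ⟨h1.lt_of_ne ?_, h2.lt_of_ne ?_⟩
            · intro h; exact ha (h ▸ x.2)
            · intro h; exact hb (h ▸ x.2)
        rw [this]
        exact isClosed_Icc.preimage continuous_subtype_val
      · exact isOpen_Ioo.preimage continuous_subtype_val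
    refine ⟨B, TopologicalSpace.isTopologicalBasis_of_isOpen_of_nhds
      (fun u hu => (hclopen u hu).isOpen) ?_, hclopen⟩
    intro x u hxu hu
    obtain ⟨W, hWopen, rfl⟩ := isOpen_induced_iff.1 hu
    have hxW : x.val ∈ W := hxu
    obtain ⟨ε, hε, hball⟩ := Metric.isOpen_iff.1 hWopen x.val hxW
    obtain ⟨a, haS, ha⟩ := hdense.exists_mem_open isOpen_Ioo
      (nonempty_Ioo.2 (by linarith : x.val - ε < x.val))
    obtain ⟨b, hbS, hb⟩ := hdense.exists_mem_open isOpen_Ioo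
      (nonempty_Ioo.2 (by linarith : x.val < x.val + ε))
    refine ⟨(↑) ⁻¹' Ioo a b, ⟨a, b, haS, hbS, rfl⟩, ⟨ha.2, hb.1⟩, ?_⟩
    intro y hy
    have : y.val ∈ ball x.val ε := by
      rw [Real.ball_eq_Ioo]
      exact ⟨ha.1.trans hy.1, hy.2.trans hb.2⟩
    exact hball this
  -- nowhere locally compact
  have hncpt : ∀ x : ↥S, ¬ ∃ s ∈ nhds x, IsCompact s := by
    rintro x ⟨s, hs, hscomp⟩
    obtain ⟨t, hts, htopen, hxt⟩ := _root_.mem_nhds_iff.1 hs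
    obtain ⟨W, hWopen, hWpre⟩ := isOpen_induced_iff.1 htopen
    have hxW : x.val ∈ W := by rw [← hWpre] at hxt; exact hxt
    set K : Set ℝ := Subtype.val '' s with hK
    have hKcomp : IsCompact K := hscomp.image continuous_subtype_val
    have hKS : K ⊆ S := by rintro - ⟨y, -, rfl⟩; exact y.2
    obtain ⟨ε, hε, hball⟩ := Metric.isOpen_iff.1 hWopen x.val hxW
    obtain ⟨q, hqQ, hqd⟩ := Metric.mem_closure_iff.1 x.2.1 ε hε
    have hqW : q ∈ W := hball (by rwa [mem_ball, dist_comm])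
    obtain ⟨ρ, hρ, hρball⟩ := Metric.isOpen_iff.1 hWopen q hqW
    have hqK : q ∈ closure K := by
      rw [Metric.mem_closure_iff]
      intro r hr
      obtain ⟨z, hzS, hzball⟩ := hacc q hqQ (min r ρ) (lt_min hr hρ)
      have hzW : z ∈ W := hρball (mem_ball.2 ((mem_ball.1 hzball).trans_le (min_le_right _ _)))
      have hzs : (⟨z, hzS⟩ : ↥S) ∈ s := hts (by rw [← hWpre]; exact hzW)
      refine ⟨z, ⟨⟨z, hzS⟩, hzs, rfl⟩, ?_⟩
      rw [dist_comm]
      exact (mem_ball.1 hzball).trans_le (min_le_left _ _)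
    rw [hKcomp.isClosed.closure_eq] at hqK
    exact hQS hqQ (hKS hqK)
  refine ⟨hsub, hPolish, hbasis, hncpt, ?_⟩
  -- closed copy of Baire space inside X
  haveI := hPolish
  obtain ⟨ψ⟩ := AU_main hbasis hncpt
  set C : Set ↥X := (↑) ⁻¹' (closure Q) with hC
  refine ⟨C, isClosed_closure.preimage continuous_subtype_val, ?_⟩
  set e : ↥C → ℝ := fun c => c.val.val with he
  have hemb : IsEmbedding e := IsEmbedding.subtypeVal.comp IsEmbedding.subtypeVal
  have hrange : range e = S := by
    ext z
    constructor
    · rintro ⟨c, rfl⟩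
      have hzX : c.val.val ∈ X := c.val.2
      have hzc : c.val.val ∈ closure Q := c.2
      exact ⟨hzc, fun hzQ => hQsub hzQ hzX⟩
    · intro hz
      exact ⟨⟨⟨z, hsub hz⟩, hz.1⟩, rfl⟩
  exact ⟨((Topology.IsEmbedding.toHomeomorph hemb).trans (Homeomorph.setCongr hrange)).trans ψ⟩
end

section
/- If every co-analytic subset of ℝ that is Menger is σ-compact, then every analytic completely Baire subset of ℝ is Polish, assuming the dichotomy: for every co-analytic non-σ-compact A ⊆ ℝ there is a compact K ⊆ ℝ with K ∩ A homeomorphic to ℕ^ℕ and K ∖ A homeomorphic to ℚ. -/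
/-- A topological space is Menger if for every sequence of open covers there exist
finite subfamilies whose unions together cover the space. -/
def MengerSpace (X : Type*) [TopologicalSpace X] : Prop :=
  ∀ U : ℕ → Set (Set X),
    (∀ n, (∀ u ∈ U n, IsOpen u) ∧ ⋃₀ U n = Set.univ) →
    ∃ V : ℕ → Set (Set X), (∀ n, V n ⊆ U n ∧ (V n).Finite) ∧
      (⋃ n, ⋃₀ V n) = Set.univ

lemma dense_preimage_homeomorph {Z W : Type*} [TopologicalSpace Z] [TopologicalSpace W]
    (f : Z ≃ₜ W) {s : Set W} (hs : Dense s) : Dense (f ⁻¹' s) := by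
  rw [dense_iff_closure_eq] at hs ⊢
  rw [← f.preimage_closure, hs, Set.preimage_univ]

/-- Transfer of the Baire property along a homeomorphism. -/
lemma baireSpace_of_homeomorph {X Y : Type*} [TopologicalSpace X] [TopologicalSpace Y]
    (e : X ≃ₜ Y) (h : BaireSpace X) : BaireSpace Y := by
  constructor
  intro g ho hd
  have hdense : Dense (⋂ n, e ⁻¹' g n) :=
    h.baire_property (fun n => e ⁻¹' g n)
      (fun n => (ho n).preimage e.continuous) (fun n => dense_preimage_homeomorph e (hd n))
  have heq : (⋂ n, e ⁻¹' g n) = e ⁻¹' (⋂ n, g n) := by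
    rw [Set.preimage_iInter]
  rw [heq] at hdense
  have h2 := dense_preimage_homeomorph e.symm hdense
  have heq2 : (⇑e.symm ⁻¹' (⇑e ⁻¹' ⋂ n, g n)) = ⋂ n, g n := by
    ext x
    simp [Set.mem_preimage]
  rwa [heq2] at h2

/-- ℚ is not a Baire space. -/
lemma not_baireSpace_rat : ¬ BaireSpace ℚ := by
  intro h
  have hdense : Dense (⋂ q : ℚ, ({q}ᶜ : Set ℚ)) :=
    dense_iInter_of_isOpen (fun q => isOpen_compl_singleton)
      (fun q => dense_compl_singleton q)
  have hempty : (⋂ q : ℚ, ({q}ᶜ : Set ℚ)) = ∅ := by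
    ext x
    simp only [Set.mem_iInter, Set.mem_compl_iff, Set.mem_singleton_iff, Set.mem_empty_iff_false,
      iff_false, not_forall, not_not]
    exact ⟨x, rfl⟩
  rw [hempty] at hdense
  exact absurd hdense.nonempty (by simp)

/-- A countable intersection of open subsets of a Polish space is Polish. -/
lemma polishSpace_iInter_isOpen {α : Type*} [TopologicalSpace α] [PolishSpace α] [T2Space α]
    {U : ℕ → Set α} (hU : ∀ n, IsOpen (U n)) : PolishSpace ↥(⋂ n, U n) := by
  haveI : ∀ n, PolishSpace (U n) := fun n => (hU n).polishSpace
  set C : Set (∀ n, U n) := {g | ∀ n, (g n : α) = (g 0 : α)} with hCdef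
  have hC : IsClosed C := by
    have : C = ⋂ n, {g : ∀ n, U n | (g n : α) = (g 0 : α)} := by
      ext g; simp [hCdef]
    rw [this]
    exact isClosed_iInter fun n =>
      isClosed_eq ((continuous_apply n).subtype_val) ((continuous_apply 0).subtype_val)
  haveI : PolishSpace C := hC.polishSpace
  let f : ↥(⋂ n, U n) → C := fun x =>
    ⟨fun n => ⟨x.1, Set.mem_iInter.1 x.2 n⟩, fun _ => rfl⟩
  let finv : C → ↥(⋂ n, U n) := fun g =>
    ⟨(g.1 0 : α), Set.mem_iInter.2 fun n => by
      have := (g.1 n).2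
      rwa [g.2 n] at this⟩
  have hcf : Continuous f := by
    apply Continuous.subtype_mk
    exact continuous_pi fun n => (continuous_subtype_val).subtype_mk _
  have hcfinv : Continuous finv := by
    have h1 : Continuous fun g : ∀ n, U n => (g 0 : α) :=
      (continuous_apply 0).subtype_val
    exact (h1.comp continuous_subtype_val).subtype_mk _
  let e : ↥(⋂ n, U n) ≃ₜ C :=
    { toFun := f
      invFun := finv
      left_inv := fun x => rfl
      right_inv := fun g => by
        apply Subtype.ext
        funext n
        exact Subtype.ext (g.2 n).symm
      continuous_toFun := hcf
      continuous_invFun := hcfinv }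
  exact e.isClosedEmbedding.polishSpace

theorem coanalytic_menger_sigmaCompact_implies_analytic_completelyBaire_polish
    (hMenger : ∀ A : Set ℝ, MeasureTheory.AnalyticSet Aᶜ → MengerSpace ↥A →
      IsSigmaCompact A)
    (hDichotomy : ∀ A : Set ℝ, MeasureTheory.AnalyticSet Aᶜ → ¬ IsSigmaCompact A →
      ∃ K : Set ℝ, IsCompact K ∧ Nonempty (↥(K ∩ A) ≃ₜ (ℕ → ℕ)) ∧
        Nonempty (↥(K \ A) ≃ₜ ℚ)) :
    ∀ B : Set ℝ, MeasureTheory.AnalyticSet B → CompletelyBaire ↥B → PolishSpace ↥B := by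
  intro B hB hCB
  by_cases hσ : IsSigmaCompact Bᶜ
  · -- B is a countable intersection of open sets, hence Polish
    obtain ⟨K, hK, hKU⟩ := hσ
    have hBeq : B = ⋂ n, (K n)ᶜ := by
      rw [← Set.compl_iUnion, hKU, compl_compl]
    rw [hBeq]
    exact polishSpace_iInter_isOpen fun n => (hK n).isClosed.isOpen_compl
  · exfalso
    have hB' : MeasureTheory.AnalyticSet Bᶜᶜ := by rwa [compl_compl]
    obtain ⟨K, hKc, -, ⟨e⟩⟩ := hDichotomy Bᶜ hB' hσ
    have hdiff : K \ Bᶜ = K ∩ B := by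
      rw [Set.diff_eq, compl_compl]
    rw [hdiff] at e
    -- the preimage of K in B is a closed subspace of B
    have hclosed : IsClosed (Subtype.val ⁻¹' K : Set ↥B) :=
      hKc.isClosed.preimage continuous_subtype_val
    haveI hBaire : BaireSpace ↥(Subtype.val ⁻¹' K : Set ↥B) := hCB _ hclosed
    -- it is homeomorphic to K ∩ B
    let e2 : ↥(Subtype.val ⁻¹' K : Set ↥B) ≃ₜ ↥(K ∩ B) :=
      { toFun := fun x => ⟨x.1.1, x.2, x.1.2⟩
        invFun := fun y => ⟨⟨y.1, y.2.2⟩, y.2.1⟩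
        left_inv := fun x => rfl
        right_inv := fun y => rfl
        continuous_toFun := (continuous_subtype_val.subtype_val).subtype_mk _
        continuous_invFun := (continuous_subtype_val.subtype_mk _).subtype_mk _ }
    exact not_baireSpace_rat
      (baireSpace_of_homeomorph e (baireSpace_of_homeomorph e2 hBaire))
end
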